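/- arXiv:1011.3777 — 5 statements merged into one kernel-verified Lean document; each statement's English description precedes it below -/
import Mathlib

section
/- Let S(z) = ∑_{n=-N}^{N} C_n z^n be an m×m matrix Laurent polynomial that is positive definite Hermitian for all but finitely many z on the unit circle. Suppose S⁺_1(z) = ∑_{n=0}^{N} A_n z^n and S⁺_2(z) = ∑_{n=0}^{N} B_n z^n are two matrix polynomials, each with nonvanishing determinant on the open unit disk {|z| < 1}, such that S(z) = S⁺_1(z) · (∑_{n=0}^{N} A_n* z^{-n}) = S⁺_2(z) · (∑_{n=0}^{N} B_n* z^{-n}) for all z ∈ ℂ \ {0}. Then there exists a constant unitary matrix U ∈ ℂ^{m×m} with S⁺_1(z) = S⁺_2(z) U for all z ∈ ℂ. -/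
open scoped BigOperators Matrix ComplexOrder

section SpectralAux

open Polynomial Matrix Finset Filter

private lemma spec_entry_natDegree_le (c : ℂ) (k : ℕ) :
    (Polynomial.C c * Polynomial.X ^ k).natDegree ≤ k := by
  refine Polynomial.natDegree_mul_le.trans ?_
  simp

private lemma spec_det_natDegree_le {m : ℕ} (M : Matrix (Fin m) (Fin m) (Polynomial ℂ))
    (b : Fin m → ℕ) (h : ∀ i j, (M i j).natDegree ≤ b i) :
    M.det.natDegree ≤ ∑ i, b i := by
  rw [Matrix.det_apply']
  refine Polynomial.natDegree_sum_le_of_forall_le _ _ fun σ _ => ?_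
  refine (Polynomial.natDegree_mul_le).trans ?_
  rw [Polynomial.natDegree_intCast, zero_add]
  refine (Polynomial.natDegree_prod_le _ _).trans ?_
  calc ∑ i, (M (σ i) i).natDegree ≤ ∑ i, b (σ i) :=
        Finset.sum_le_sum fun i _ => h (σ i) i
    _ = ∑ i, b i := Equiv.sum_comp σ b

private lemma spec_adjugate_natDegree_le {m : ℕ} (M : Matrix (Fin m) (Fin m) (Polynomial ℂ))
    (Dg : ℕ) (h : ∀ i j, (M i j).natDegree ≤ Dg) (l j : Fin m) :
    (M.adjugate l j).natDegree ≤ (m - 1) * Dg := by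
  rw [Matrix.adjugate_apply]
  refine (spec_det_natDegree_le _ (fun i => if i = j then 0 else Dg) ?_).trans ?_
  · intro i j'
    by_cases hij : i = j
    · subst hij
      simp only [if_pos rfl, Matrix.updateRow_self]
      rcases eq_or_ne j' l with h' | h'
      · simp [Pi.single_apply, h']
      · simp [Pi.single_apply, h']
    · simp only [Matrix.updateRow_ne hij, if_neg hij]
      exact h i j'
  · rw [← Finset.sum_erase Finset.univ (a := j)
      (f := fun i => if i = j then 0 else Dg) (by simp)]
    rw [Finset.sum_congr rfl (fun i hi => if_neg (Finset.ne_of_mem_erase hi))]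
    simp [Finset.card_erase_of_mem, Finset.card_univ]

private lemma spec_expInj :
    Function.Injective (fun k : ℕ => Complex.exp ((1/(k+1) : ℝ) * Complex.I)) := by
  intro k l hkl
  simp only at hkl
  rw [Complex.exp_eq_exp_iff_exists_int] at hkl
  obtain ⟨n, hn⟩ := hkl
  have hn2 := hn
  push_cast at hn2
  have hn' : 1/((k:ℂ)+1) = 1/((l:ℂ)+1) + (n:ℂ) * (2*(Real.pi:ℂ)) := by
    refine mul_right_cancel₀ Complex.I_ne_zero ?_
    rw [hn2]; ring
  have him : (1/(k+1) : ℝ) = (1/(l+1) : ℝ) + n * (2*Real.pi) := by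
    apply Complex.ofReal_injective
    push_cast
    linear_combination hn'
  have hk : (0:ℝ) < 1/(k+1) := by positivity
  have hk1 : (1:ℝ)/(k+1) ≤ 1 := by
    rw [div_le_one (by positivity)]; exact le_add_of_nonneg_left (Nat.cast_nonneg k)
  have hl : (0:ℝ) < 1/(l+1) := by positivity
  have hl1 : (1:ℝ)/(l+1) ≤ 1 := by
    rw [div_le_one (by positivity)]; exact le_add_of_nonneg_left (Nat.cast_nonneg l)
  have hn0 : n = 0 := by
    rcases lt_trichotomy n 0 with h | h | h
    · exfalso
      have h1 : n ≤ -1 := by omega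
      have h1' : (n:ℝ) ≤ -1 := by exact_mod_cast h1
      nlinarith [Real.pi_gt_three]
    · exact h
    · exfalso
      have h1 : (1:ℤ) ≤ n := h
      have h1' : (1:ℝ) ≤ (n:ℝ) := by exact_mod_cast h1
      nlinarith [Real.pi_gt_three]
  rw [hn0] at him
  simp only [Int.cast_zero, zero_mul, add_zero] at him
  field_simp at him
  exact_mod_cast (by linarith : (k:ℝ) = l)

private lemma spec_absExp (k : ℕ) :
    ‖Complex.exp ((1/(k+1) : ℝ) * Complex.I)‖ = 1 :=
  Complex.norm_exp_ofReal_mul_I _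

private lemma spec_tendExp :
    Tendsto (fun k : ℕ => Complex.exp ((1/(k+1) : ℝ) * Complex.I)) atTop (nhds 1) := by
  have h1 : Tendsto (fun k : ℕ => (1/(k+1) : ℝ)) atTop (nhds 0) := by
    simpa using tendsto_one_div_add_atTop_nhds_zero_nat (𝕜 := ℝ)
  have h2 : Tendsto (fun k : ℕ => ((1/(k+1) : ℝ) : ℂ) * Complex.I) atTop (nhds 0) := by
    have h3 := (Complex.continuous_ofReal.tendsto 0).comp h1
    simpa using h3.mul_const Complex.I
  simpa [Function.comp_def] using (Complex.continuous_exp.tendsto 0).comp h2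

private lemma spec_circle_le_limit (e d : Polynomial ℂ) (Z : Set ℂ) (hZ : Z.Finite) (z0 : ℂ)
    (h0 : ‖z0‖ = 1)
    (h : ∀ z : ℂ, ‖z‖ = 1 → z ∉ Z →
      ‖e.eval z‖ ≤ ‖d.eval z‖) :
    ‖e.eval z0‖ ≤ ‖d.eval z0‖ := by
  set u : ℕ → ℂ := fun k => z0 * Complex.exp ((1/(k+1) : ℝ) * Complex.I) with hu
  have hz0 : z0 ≠ 0 := by
    intro h'; rw [h'] at h0; simp at h0
  have huinj : Function.Injective u := fun k l hkl =>
    spec_expInj (mul_left_cancel₀ hz0 hkl)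
  have huabs : ∀ k, ‖u k‖ = 1 := fun k => by
    simp only [hu, norm_mul, h0, spec_absExp, one_mul]
  have hutend : Tendsto u atTop (nhds z0) := by
    have h4 := spec_tendExp.const_mul z0
    rw [mul_one] at h4
    exact h4
  have hev : ∀ᶠ k in atTop, u k ∉ Z := by
    rw [← Nat.cofinite_eq_atTop]
    have : (u ⁻¹' Z).Finite := hZ.preimage (Set.injOn_of_injective huinj)
    exact this.eventually_cofinite_notMem
  have hte : Tendsto (fun k => ‖e.eval (u k)‖) atTop
      (nhds (‖e.eval z0‖)) :=
    (continuous_norm.tendsto _).comp (((e.continuous).tendsto _).comp hutend)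
  have htd : Tendsto (fun k => ‖d.eval (u k)‖) atTop
      (nhds (‖d.eval z0‖)) :=
    (continuous_norm.tendsto _).comp (((d.continuous).tendsto _).comp hutend)
  refine le_of_tendsto_of_tendsto hte htd ?_
  filter_upwards [hev] with k hk
  exact h (u k) (huabs k) hk

private lemma spec_exists_circle_avoid (Z : Set ℂ) (hZ : Z.Finite) :
    ∃ z : ℂ, ‖z‖ = 1 ∧ z ∉ Z := by
  have hfin : ((fun k : ℕ => Complex.exp ((1/(k+1) : ℝ) * Complex.I)) ⁻¹' Z).Finite :=
    hZ.preimage (Set.injOn_of_injective spec_expInj)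
  obtain ⟨k, hk⟩ := hfin.infinite_compl.nonempty
  exact ⟨_, spec_absExp k, hk⟩

private lemma spec_invSum {m Nn : ℕ} (M : ℕ → Matrix (Fin m) (Fin m) ℂ) (z : ℂ) :
    (∑ n ∈ Finset.range Nn, z ^ (-(n:ℤ)) • (M n)ᴴ)
      = (∑ n ∈ Finset.range Nn, (((starRingEnd ℂ) z)⁻¹) ^ n • M n)ᴴ := by
  ext i j
  simp only [Matrix.sum_apply, Matrix.smul_apply, Matrix.conjTranspose_apply, smul_eq_mul,
    star_sum, star_mul', star_pow, star_inv₀, Complex.star_def, map_inv₀, Complex.conj_conj]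
  refine Finset.sum_congr rfl fun n _ => ?_
  rw [_root_.zpow_neg, zpow_natCast, inv_pow]

private lemma spec_entry_le_one {m : ℕ} (G : Matrix (Fin m) (Fin m) ℂ) (h : G * Gᴴ = 1)
    (i j : Fin m) : ‖G i j‖ ≤ 1 := by
  have h1 : (G * Gᴴ) i i = 1 := by rw [h]; simp [Matrix.one_apply]
  rw [Matrix.mul_apply] at h1
  have h2 : ∑ k, (‖G i k‖)^2 = 1 := by
    have h3 : ∑ k, ((Complex.normSq (G i k) : ℂ)) = 1 := by
      rw [← h1]
      refine Finset.sum_congr rfl fun k _ => ?_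
      rw [Matrix.conjTranspose_apply,
        show (star (G i k)) = (starRingEnd ℂ) (G i k) from rfl, Complex.mul_conj]
    have h4 : ((∑ k, Complex.normSq (G i k) : ℝ) : ℂ) = ((1:ℝ):ℂ) := by
      push_cast
      simpa using h3
    have h5 := Complex.ofReal_injective h4
    rw [← h5]
    refine Finset.sum_congr rfl fun k _ => ?_
    rw [Complex.sq_norm]
  have h6 : (‖G i j‖)^2 ≤ 1 := by
    rw [← h2]
    exact Finset.single_le_sum (fun k _ => sq_nonneg (‖G i k‖))
      (Finset.mem_univ j)
  nlinarith [norm_nonneg (G i j)]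

private lemma spec_unitary_of_fac {m : ℕ} (P Q U : Matrix (Fin m) (Fin m) ℂ)
    (hdet : IsUnit Q.det) (hPQ : P * Pᴴ = Q * Qᴴ) (hU : P = Q * U) : U * Uᴴ = 1 := by
  have hdetH : IsUnit Qᴴ.det := by
    rw [Matrix.det_conjTranspose]
    exact hdet.star
  have h1 : Q * (U * (Uᴴ * Qᴴ)) = Q * Qᴴ := by
    calc Q * (U * (Uᴴ * Qᴴ)) = (Q * U) * (Q * U)ᴴ := by
          rw [Matrix.conjTranspose_mul]
          simp only [Matrix.mul_assoc]
      _ = P * Pᴴ := by rw [← hU]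
      _ = Q * Qᴴ := hPQ
  have h2 : U * (Uᴴ * Qᴴ) = Qᴴ := by
    have := congrArg (fun X => Q⁻¹ * X) h1
    simpa [Matrix.nonsing_inv_mul_cancel_left _ _ hdet] using this
  have h3 : (U * Uᴴ) * Qᴴ = 1 * Qᴴ := by
    rw [one_mul, Matrix.mul_assoc]
    exact h2
  have := congrArg (fun X => X * (Qᴴ)⁻¹) h3
  simpa [Matrix.mul_nonsing_inv_cancel_right _ _ hdetH, Matrix.mul_nonsing_inv _ hdetH]
    using this

private lemma spec_evalMat {m Nn : ℕ} (M : ℕ → Matrix (Fin m) (Fin m) ℂ) (e : ℕ → ℕ) (z : ℂ) :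
    (Matrix.of fun i j => ∑ n ∈ Finset.range Nn,
        Polynomial.C (M n i j) * Polynomial.X ^ (e n)).map (Polynomial.eval z)
      = ∑ n ∈ Finset.range Nn, z ^ (e n) • M n := by
  ext i j
  simp only [Matrix.map_apply, Matrix.of_apply, Polynomial.eval_finset_sum, Polynomial.eval_mul,
    Polynomial.eval_C, Polynomial.eval_pow, Polynomial.eval_X, Matrix.sum_apply,
    Matrix.smul_apply, smul_eq_mul]
  exact Finset.sum_congr rfl fun n _ => mul_comm _ _

private lemma spec_evalTildeMat {m : ℕ} (Nn N : ℕ) (M : ℕ → Matrix (Fin m) (Fin m) ℂ) (z : ℂ)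
    (hz : z ≠ 0) (hle : ∀ n ∈ Finset.range Nn, n ≤ N) :
    (Matrix.of fun i j => ∑ n ∈ Finset.range Nn,
        Polynomial.C (M n i j) * Polynomial.X ^ (N - n)).map (Polynomial.eval z)
      = z ^ N • ∑ n ∈ Finset.range Nn, z ^ (-(n:ℤ)) • M n := by
  ext i j
  simp only [Matrix.map_apply, Matrix.of_apply, Polynomial.eval_finset_sum, Polynomial.eval_mul,
    Polynomial.eval_C, Polynomial.eval_pow, Polynomial.eval_X, Matrix.smul_apply,
    Matrix.sum_apply, smul_eq_mul, Finset.mul_sum]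
  refine Finset.sum_congr rfl fun n hn => ?_
  rw [_root_.zpow_neg, zpow_natCast, pow_sub₀ z hz (hle n hn)]
  field_simp

private lemma spec_coeff_det_tilde {m N : ℕ} (M : ℕ → Matrix (Fin m) (Fin m) ℂ) :
    ((Matrix.of fun i j => ∑ n ∈ Finset.range (N+1),
        Polynomial.C (M n i j) * Polynomial.X ^ (N - n)) :
      Matrix (Fin m) (Fin m) (Polynomial ℂ)).det.coeff (m * N) = (M 0).det := by
  rw [Matrix.det_apply', Polynomial.finset_sum_coeff, Matrix.det_apply']
  refine Finset.sum_congr rfl fun σ _ => ?_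
  rw [← Polynomial.C_eq_intCast, Polynomial.coeff_C_mul]
  congr 1
  have hcard : m * N = (Finset.univ : Finset (Fin m)).card * N := by simp
  rw [hcard, Polynomial.coeff_prod_of_natDegree_le]
  · refine Finset.prod_congr rfl fun i _ => ?_
    rw [Matrix.of_apply, Polynomial.finset_sum_coeff]
    rw [Finset.sum_eq_single 0]
    · simp
    · intro n hn hn0
      rw [Polynomial.coeff_C_mul, Polynomial.coeff_X_pow, if_neg (by
        simp only [Finset.mem_range] at hn; omega)]
      simp
    · intro h0
      exact absurd (Finset.mem_range.mpr (Nat.succ_pos N)) h0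
  · intro p _
    rw [Matrix.of_apply]
    exact Polynomial.natDegree_sum_le_of_forall_le _ _ fun n _ =>
      (spec_entry_natDegree_le _ _).trans (Nat.sub_le N n)

private lemma spec_sum_zero_pow {m N : ℕ} (M : ℕ → Matrix (Fin m) (Fin m) ℂ) :
    ∑ n ∈ Finset.range (N+1), (0:ℂ) ^ n • M n = M 0 := by
  rw [Finset.sum_eq_single 0]
  · simp
  · intro n _ hn0
    rw [zero_pow hn0, zero_smul]
  · intro h0
    exact absurd (Finset.mem_range.mpr (Nat.succ_pos N)) h0

private lemma spec_map_mul {m : ℕ} (M N : Matrix (Fin m) (Fin m) (Polynomial ℂ)) (z : ℂ) :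
    (M * N).map (Polynomial.eval z)
      = M.map (Polynomial.eval z) * N.map (Polynomial.eval z) := by
  rw [← Polynomial.coe_evalRingHom, Matrix.map_mul]

end SpectralAux

/-- **Uniqueness of the spectral factor on the unit circle.**
If `S(z) = ∑_{n=-N}^N C_n z^n` is positive definite Hermitian for all but
finitely many `z` on the unit circle and `S⁺₁(z) = ∑ A_n z^n`,
`S⁺₂(z) = ∑ B_n z^n` are two spectral factors (nonvanishing determinant on the
open unit disk, `S = S⁺ᵢ S⁻ᵢ` on `ℂ \ {0}`), then `S⁺₁ = S⁺₂ U` for a constant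
unitary matrix `U`. -/
theorem spectral_factor_unique_circle
    (m N : ℕ) (hm : 0 < m) (hN : 0 < N)
    (C : ℤ → Matrix (Fin m) (Fin m) ℂ)
    (S : ℂ → Matrix (Fin m) (Fin m) ℂ)
    (hS : ∀ z : ℂ, z ≠ 0 → S z = ∑ n ∈ Finset.Icc (-(N : ℤ)) (N : ℤ), z ^ n • C n)
    (hpos : {z : ℂ | ‖z‖ = 1 ∧ ¬ (S z).PosDef}.Finite)
    (A B : ℕ → Matrix (Fin m) (Fin m) ℂ)
    (hAdet : ∀ z : ℂ, ‖z‖ < 1 →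
      (∑ n ∈ Finset.range (N + 1), z ^ n • A n).det ≠ 0)
    (hBdet : ∀ z : ℂ, ‖z‖ < 1 →
      (∑ n ∈ Finset.range (N + 1), z ^ n • B n).det ≠ 0)
    (hAfac : ∀ z : ℂ, z ≠ 0 →
      S z = (∑ n ∈ Finset.range (N + 1), z ^ n • A n) *
            (∑ n ∈ Finset.range (N + 1), z ^ (-(n : ℤ)) • (A n)ᴴ))
    (hBfac : ∀ z : ℂ, z ≠ 0 →
      S z = (∑ n ∈ Finset.range (N + 1), z ^ n • B n) *
            (∑ n ∈ Finset.range (N + 1), z ^ (-(n : ℤ)) • (B n)ᴴ)) :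
    ∃ U : Matrix (Fin m) (Fin m) ℂ, U * Uᴴ = 1 ∧
      ∀ z : ℂ, (∑ n ∈ Finset.range (N + 1), z ^ n • A n) =
        (∑ n ∈ Finset.range (N + 1), z ^ n • B n) * U := by
  classical
  -- polynomial matrices
  set Pm : Matrix (Fin m) (Fin m) (Polynomial ℂ) :=
    Matrix.of fun i j => ∑ n ∈ Finset.range (N+1), Polynomial.C (A n i j) * Polynomial.X ^ n
    with hPm
  set Qm : Matrix (Fin m) (Fin m) (Polynomial ℂ) :=
    Matrix.of fun i j => ∑ n ∈ Finset.range (N+1), Polynomial.C (B n i j) * Polynomial.X ^ n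
    with hQm
  set Ta : Matrix (Fin m) (Fin m) (Polynomial ℂ) :=
    Matrix.of fun i j => ∑ n ∈ Finset.range (N+1),
      Polynomial.C ((A n)ᴴ i j) * Polynomial.X ^ (N - n) with hTa
  set Tb : Matrix (Fin m) (Fin m) (Polynomial ℂ) :=
    Matrix.of fun i j => ∑ n ∈ Finset.range (N+1),
      Polynomial.C ((B n)ᴴ i j) * Polynomial.X ^ (N - n) with hTb
  have hle : ∀ n ∈ Finset.range (N+1), n ≤ N := fun n hn =>
    Nat.lt_succ_iff.mp (Finset.mem_range.mp hn)
  have hPev : ∀ z : ℂ, Pm.map (Polynomial.eval z)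
      = ∑ n ∈ Finset.range (N+1), z ^ n • A n := fun z =>
    spec_evalMat A (fun n => n) z
  have hQev : ∀ z : ℂ, Qm.map (Polynomial.eval z)
      = ∑ n ∈ Finset.range (N+1), z ^ n • B n := fun z =>
    spec_evalMat B (fun n => n) z
  have hTaev : ∀ z : ℂ, z ≠ 0 → Ta.map (Polynomial.eval z)
      = z ^ N • ∑ n ∈ Finset.range (N+1), z ^ (-(n:ℤ)) • (A n)ᴴ := fun z hz =>
    spec_evalTildeMat (N+1) N (fun n => (A n)ᴴ) z hz hle
  have hTbev : ∀ z : ℂ, z ≠ 0 → Tb.map (Polynomial.eval z)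
      = z ^ N • ∑ n ∈ Finset.range (N+1), z ^ (-(n:ℤ)) • (B n)ᴴ := fun z hz =>
    spec_evalTildeMat (N+1) N (fun n => (B n)ᴴ) z hz hle
  -- the key polynomial identity
  have hinf : {z : ℂ | z ≠ 0}.Infinite := by
    have h1 : ({0} : Set ℂ).Finite := Set.finite_singleton 0
    exact h1.infinite_compl
  have hkey : Pm * Ta = Qm * Tb := by
    refine Matrix.ext fun i j => ?_
    apply Polynomial.eq_of_infinite_eval_eq
    refine hinf.mono ?_
    intro z hz
    have hz' : z ≠ 0 := hz
    have h1 : (Pm * Ta).map (Polynomial.eval z) = (Qm * Tb).map (Polynomial.eval z) := by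
      rw [spec_map_mul, spec_map_mul, hPev, hQev, hTaev z hz', hTbev z hz',
        Matrix.mul_smul, Matrix.mul_smul, ← hAfac z hz', ← hBfac z hz']
    have h2 := congrFun (congrFun h1 i) j
    simpa [Matrix.map_apply] using h2
  -- determinants
  set q : Polynomial ℂ := Qm.det with hq
  set a : Polynomial ℂ := Ta.det with ha
  have hqev : ∀ z : ℂ, Polynomial.eval z q
      = (∑ n ∈ Finset.range (N+1), z ^ n • B n).det := by
    intro z
    have h1 := RingHom.map_det (Polynomial.evalRingHom z) Qm
    rw [RingHom.mapMatrix_apply, Polynomial.coe_evalRingHom] at h1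
    rw [hq, h1, hQev]
  have hq0 : ∀ z : ℂ, ‖z‖ < 1 → Polynomial.eval z q ≠ 0 := fun z hz => by
    rw [hqev]; exact hBdet z hz
  have hqne : q ≠ 0 := fun h0 => hq0 0 (by simp) (by rw [h0]; simp)
  have haev : ∀ z : ℂ, z ≠ 0 → Polynomial.eval z a
      = (z ^ N) ^ m * star (∑ n ∈ Finset.range (N+1),
          (((starRingEnd ℂ) z)⁻¹) ^ n • A n).det := by
    intro z hz
    have h1 := RingHom.map_det (Polynomial.evalRingHom z) Ta
    rw [RingHom.mapMatrix_apply, Polynomial.coe_evalRingHom] at h1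
    rw [ha, h1, hTaev z hz, spec_invSum, Matrix.det_smul, Matrix.det_conjTranspose]
    simp [Finset.card_univ]
  have ha1 : ∀ z : ℂ, 1 < ‖z‖ → Polynomial.eval z a ≠ 0 := by
    intro z hz
    have hz0 : z ≠ 0 := by
      intro h0; rw [h0] at hz; simp only [norm_zero] at hz; linarith
    rw [haev z hz0]
    have hw : ‖((starRingEnd ℂ) z)⁻¹‖ < 1 := by
      rw [norm_inv, Complex.norm_conj]
      rw [inv_lt_one_iff₀]
      right; exact hz
    have h2 := hAdet _ hw
    exact mul_ne_zero (pow_ne_zero _ (pow_ne_zero _ hz0)) (star_ne_zero.mpr h2)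
  have hA0 : (A 0).det ≠ 0 := by
    have h1 := hAdet 0 (by simp)
    rwa [spec_sum_zero_pow] at h1
  have hA0H : ((A 0)ᴴ).det ≠ 0 := by
    rw [Matrix.det_conjTranspose]
    exact star_ne_zero.mpr hA0
  have hacoeff : a.coeff (m * N) = ((A 0)ᴴ).det := spec_coeff_det_tilde (fun n => (A n)ᴴ)
  have hane : a ≠ 0 := fun h0 => hA0H (by rw [← hacoeff, h0]; simp)
  have hTa_deg : ∀ i j, (Ta i j).natDegree ≤ N := by
    intro i j
    rw [hTa, Matrix.of_apply]
    exact Polynomial.natDegree_sum_le_of_forall_le _ _ fun n _ =>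
      (spec_entry_natDegree_le _ _).trans (Nat.sub_le N n)
  have hTb_deg : ∀ i j, (Tb i j).natDegree ≤ N := by
    intro i j
    rw [hTb, Matrix.of_apply]
    exact Polynomial.natDegree_sum_le_of_forall_le _ _ fun n _ =>
      (spec_entry_natDegree_le _ _).trans (Nat.sub_le N n)
  have hadeg : a.natDegree = m * N := by
    refine le_antisymm ?_ ?_
    · refine (spec_det_natDegree_le Ta (fun _ => N) (fun i j => hTa_deg i j)).trans_eq ?_
      simp [Finset.sum_const, Finset.card_univ, smul_eq_mul]
    · exact Polynomial.le_natDegree_of_ne_zero (by rw [hacoeff]; exact hA0H)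
  -- the matrix relation
  set H : Matrix (Fin m) (Fin m) (Polynomial ℂ) := Qm.adjugate * Pm with hH
  set K : Matrix (Fin m) (Fin m) (Polynomial ℂ) := Tb * Ta.adjugate with hK
  have hmat : a • H = q • K := by
    have e1 : Ta * Ta.adjugate = a • (1 : Matrix (Fin m) (Fin m) (Polynomial ℂ)) :=
      Matrix.mul_adjugate Ta
    have e2 : Qm.adjugate * Qm = q • (1 : Matrix (Fin m) (Fin m) (Polynomial ℂ)) :=
      Matrix.adjugate_mul Qm
    calc a • H = H * (a • (1 : Matrix (Fin m) (Fin m) (Polynomial ℂ))) := by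
          rw [Matrix.mul_smul, Matrix.mul_one]
      _ = (Qm.adjugate * Pm) * (Ta * Ta.adjugate) := by rw [e1, hH]
      _ = Qm.adjugate * ((Pm * Ta) * Ta.adjugate) := by simp only [Matrix.mul_assoc]
      _ = Qm.adjugate * ((Qm * Tb) * Ta.adjugate) := by rw [hkey]
      _ = (Qm.adjugate * Qm) * (Tb * Ta.adjugate) := by simp only [Matrix.mul_assoc]
      _ = (q • (1 : Matrix (Fin m) (Fin m) (Polynomial ℂ))) * K := by rw [e2, hK]
      _ = q • K := by rw [Matrix.smul_mul, Matrix.one_mul]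
  have hent : ∀ i j, a * H i j = q * K i j := by
    intro i j
    have h1 := congrFun (congrFun hmat i) j
    simpa [Matrix.smul_apply, smul_eq_mul] using h1
  -- degree bound on K
  have hK_deg : ∀ i j, (K i j).natDegree ≤ m * N := by
    intro i j
    rw [hK]
    rw [Matrix.mul_apply]
    refine Polynomial.natDegree_sum_le_of_forall_le _ _ fun l _ => ?_
    refine Polynomial.natDegree_mul_le.trans ?_
    have h1 := hTb_deg i l
    have h2 := spec_adjugate_natDegree_le Ta N (fun i' j' => hTa_deg i' j') l j
    have h3 : N + (m - 1) * N = m * N := by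
      obtain ⟨m', rfl⟩ : ∃ m', m = m' + 1 := ⟨m - 1, by omega⟩
      simp [Nat.succ_sub_one, Nat.succ_mul, Nat.add_comm]
    omega
  -- positive definite points on the circle give factorizations
  have hfac : ∀ z : ℂ, ‖z‖ = 1 → (S z).PosDef →
      S z = (∑ n ∈ Finset.range (N+1), z ^ n • A n) *
            (∑ n ∈ Finset.range (N+1), z ^ n • A n)ᴴ ∧
      S z = (∑ n ∈ Finset.range (N+1), z ^ n • B n) *
            (∑ n ∈ Finset.range (N+1), z ^ n • B n)ᴴ ∧
      IsUnit (∑ n ∈ Finset.range (N+1), z ^ n • B n).det := by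
    intro z hz1 hSpd
    have hz0 : z ≠ 0 := by
      intro h0; rw [h0] at hz1; simp at hz1
    have hw : ((starRingEnd ℂ) z)⁻¹ = z := by
      refine inv_eq_of_mul_eq_one_right ?_
      rw [mul_comm, Complex.mul_conj]
      rw [Complex.normSq_eq_norm_sq, hz1]
      norm_num
    have hSA : S z = (∑ n ∈ Finset.range (N+1), z ^ n • A n) *
        (∑ n ∈ Finset.range (N+1), z ^ n • A n)ᴴ := by
      rw [hAfac z hz0, spec_invSum A z, hw]
    have hSB : S z = (∑ n ∈ Finset.range (N+1), z ^ n • B n) *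
        (∑ n ∈ Finset.range (N+1), z ^ n • B n)ᴴ := by
      rw [hBfac z hz0, spec_invSum B z, hw]
    have hdetS : (S z).det ≠ 0 := hSpd.det_pos.ne'
    have hdetSB : IsUnit (∑ n ∈ Finset.range (N+1), z ^ n • B n).det := by
      rw [isUnit_iff_ne_zero]
      intro h0
      apply hdetS
      rw [hSB, Matrix.det_mul, h0, zero_mul]
    exact ⟨hSA, hSB, hdetSB⟩
  -- each entry of H is q times a constant
  have hexists : ∀ i j, ∃ u : ℂ, H i j = q * Polynomial.C u := by
    intro i j
    have hhk : a * H i j = q * K i j := hent i j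
    set g : Polynomial ℂ := GCDMonoid.gcd (H i j) q with hg
    have hgne : g ≠ 0 := gcd_ne_zero_of_right hqne
    set d : Polynomial ℂ := q / g with hd
    set e : Polynomial ℂ := H i j / g with he
    have hgd : g * d = q := EuclideanDomain.mul_div_cancel' hgne (gcd_dvd_right (H i j) q)
    have hge : g * e = H i j := EuclideanDomain.mul_div_cancel' hgne (gcd_dvd_left (H i j) q)
    have hcop : IsCoprime e d := isCoprime_div_gcd_div_gcd hqne
    have hdne : d ≠ 0 := right_div_gcd_ne_zero hqne
    have hae : a * e = d * K i j := by
      have h1 : g * (a * e) = g * (d * K i j) := by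
        calc g * (a * e) = a * (g * e) := by ring
          _ = a * H i j := by rw [hge]
          _ = q * K i j := hhk
          _ = (g * d) * K i j := by rw [hgd]
          _ = g * (d * K i j) := by ring
      exact mul_left_cancel₀ hgne h1
    have hda : d ∣ a := by
      refine (hcop.symm).dvd_of_dvd_mul_right ?_
      exact ⟨K i j, hae⟩
    have hdq : d ∣ q := ⟨g, by rw [← hgd]; ring⟩
    have hdeg0 : d.natDegree = 0 := by
      by_contra hdeg
      have hdp0 : d ≠ 0 := hdne
      have hddeg : 0 < d.degree := by
        rw [Polynomial.degree_eq_natDegree hdp0]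
        exact_mod_cast Nat.pos_of_ne_zero hdeg
      obtain ⟨z0, hz0root⟩ := Complex.exists_root hddeg
      have hz0d : Polynomial.eval z0 d = 0 := hz0root
      have habs1 : ‖z0‖ = 1 := by
        have h1 : ¬ ‖z0‖ < 1 := by
          intro hlt
          apply hq0 z0 hlt
          obtain ⟨c', hc'⟩ := hdq
          rw [hc', Polynomial.eval_mul, hz0d, zero_mul]
        have h2 : ¬ 1 < ‖z0‖ := by
          intro hgt
          apply ha1 z0 hgt
          obtain ⟨c', hc'⟩ := hda
          rw [hc', Polynomial.eval_mul, hz0d, zero_mul]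
        push_neg at h1 h2
        linarith
      have hez0 : Polynomial.eval z0 e ≠ 0 := by
        intro h0
        have h1 : (Polynomial.X - Polynomial.C z0) ∣ e := Polynomial.dvd_iff_isRoot.mpr h0
        have h2 : (Polynomial.X - Polynomial.C z0) ∣ d := Polynomial.dvd_iff_isRoot.mpr hz0d
        exact Polynomial.not_isUnit_X_sub_C z0 (hcop.isUnit_of_dvd' h1 h2)
      -- the inequality on the circle
      have hcirc : ∀ z : ℂ, ‖z‖ = 1 →
          z ∉ {z : ℂ | ‖z‖ = 1 ∧ ¬ (S z).PosDef} →
          ‖e.eval z‖ ≤ ‖d.eval z‖ := by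
        intro z hz1 hzgood
        have hSpd : (S z).PosDef := by
          by_contra hnpd
          exact hzgood ⟨hz1, hnpd⟩
        obtain ⟨hSA, hSB, hdetSB⟩ := hfac z hz1 hSpd
        have hz0 : z ≠ 0 := by
          intro h0; rw [h0] at hz1; simp at hz1
        set SAz := ∑ n ∈ Finset.range (N+1), z ^ n • A n with hSAz
        set SBz := ∑ n ∈ Finset.range (N+1), z ^ n • B n with hSBz
        set G : Matrix (Fin m) (Fin m) ℂ := SBz⁻¹ * SAz with hG
        have hQG : SBz * G = SAz := Matrix.mul_nonsing_inv_cancel_left SBz SAz hdetSB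
        have hGu : G * Gᴴ = 1 :=
          spec_unitary_of_fac SAz SBz G hdetSB (by rw [← hSA, ← hSB]) hQG.symm
        -- eval of H entry
        have hHz : Polynomial.eval z (H i j) = Polynomial.eval z q * G i j := by
          have h1 : H.map (Polynomial.eval z)
              = (Qm.map (Polynomial.eval z)).adjugate * Pm.map (Polynomial.eval z) := by
            rw [hH, spec_map_mul]
            congr 1
            have h2 := RingHom.map_adjugate (Polynomial.evalRingHom z) Qm
            rw [RingHom.mapMatrix_apply, RingHom.mapMatrix_apply,
              Polynomial.coe_evalRingHom] at h2
            exact h2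
          have h3 : (SBz).adjugate * SAz = (SBz).det • G := by
            have h4 : SBz⁻¹ = Ring.inverse (SBz).det • SBz.adjugate := Matrix.inv_def SBz
            rw [hG, h4, Matrix.smul_mul, smul_smul, Ring.mul_inverse_cancel _ hdetSB, one_smul]
          have h5 := congrFun (congrFun h1 i) j
          rw [Matrix.map_apply, hPev, hQev] at h5
          rw [← hSAz, ← hSBz] at h5
          rw [h5, h3, Matrix.smul_apply, smul_eq_mul, hqev z, ← hSBz]
        have hqz : Polynomial.eval z q ≠ 0 := by
          rw [hqev z, ← hSBz]
          exact hdetSB.ne_zero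
        have hed : e * q = H i j * d := by
          calc e * q = e * (g * d) := by rw [hgd]
            _ = (g * e) * d := by ring
            _ = H i j * d := by rw [hge]
        have hevz : Polynomial.eval z e * Polynomial.eval z q
            = Polynomial.eval z (H i j) * Polynomial.eval z d := by
          have h6 := congrArg (Polynomial.eval z) hed
          rwa [Polynomial.eval_mul, Polynomial.eval_mul] at h6
        have heval : Polynomial.eval z e = G i j * Polynomial.eval z d := by
          apply mul_right_cancel₀ hqz
          rw [hevz, hHz]
          ring
        rw [heval, norm_mul]
        exact mul_le_of_le_one_left (norm_nonneg _) (spec_entry_le_one G hGu i j)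
      have hfin := spec_circle_le_limit e d _ hpos z0 habs1 hcirc
      rw [hz0d] at hfin
      simp only [norm_zero] at hfin
      have h7 : ‖Polynomial.eval z0 e‖ = 0 :=
        le_antisymm hfin (norm_nonneg _)
      exact hez0 (norm_eq_zero.mp h7)
    -- d is a nonzero constant
    have hdc : d = Polynomial.C (d.coeff 0) := Polynomial.eq_C_of_natDegree_eq_zero hdeg0
    have hcne : d.coeff 0 ≠ 0 := fun h0 => hdne (by rw [hdc, h0, map_zero])
    set r : Polynomial ℂ := Polynomial.C (d.coeff 0)⁻¹ * e with hr
    have hqr : q * r = H i j := by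
      calc q * r = (g * d) * (Polynomial.C (d.coeff 0)⁻¹ * e) := by rw [hgd]
        _ = (d * Polynomial.C (d.coeff 0)⁻¹) * (g * e) := by ring
        _ = (Polynomial.C (d.coeff 0) * Polynomial.C (d.coeff 0)⁻¹) * (g * e) := by
            rw [← hdc]
        _ = H i j := by
            rw [← Polynomial.C_mul, mul_inv_cancel₀ hcne, Polynomial.C_1, one_mul, hge]
    have har : a * r = K i j := by
      have h1 : q * (a * r) = q * K i j := by
        calc q * (a * r) = a * (q * r) := by ring
          _ = a * H i j := by rw [hqr]
          _ = q * K i j := hhk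
      exact mul_left_cancel₀ hqne h1
    have hrdeg : r.natDegree = 0 := by
      rcases eq_or_ne r 0 with h0 | h0
      · rw [h0]; simp
      · have h1 : (a * r).natDegree = a.natDegree + r.natDegree :=
          Polynomial.natDegree_mul hane h0
        rw [har, hadeg] at h1
        have h2 := hK_deg i j
        omega
    refine ⟨r.coeff 0, ?_⟩
    rw [← hqr]
    exact congrArg (q * ·) (Polynomial.eq_C_of_natDegree_eq_zero hrdeg)
  -- assemble U
  choose Ufun hU using hexists
  set U : Matrix (Fin m) (Fin m) ℂ := Matrix.of Ufun with hUdef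
  have hQmH : Qm * H = q • Pm := by
    calc Qm * H = (Qm * Qm.adjugate) * Pm := by rw [hH, Matrix.mul_assoc]
      _ = (q • (1 : Matrix (Fin m) (Fin m) (Polynomial ℂ))) * Pm := by
          rw [Matrix.mul_adjugate, hq]
      _ = q • Pm := by rw [Matrix.smul_mul, Matrix.one_mul]
  have hQmH2 : Qm * H = q • (Qm * U.map Polynomial.C) := by
    refine Matrix.ext fun i j => ?_
    rw [Matrix.mul_apply, Matrix.smul_apply, Matrix.mul_apply, smul_eq_mul, Finset.mul_sum]
    refine Finset.sum_congr rfl fun l _ => ?_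
    rw [hU l j]
    simp only [hUdef, Matrix.map_apply, Matrix.of_apply]
    ring
  have hPQU : Pm = Qm * U.map Polynomial.C := by
    refine Matrix.ext fun i j => ?_
    have h1 : (q • Pm) i j = (q • (Qm * U.map Polynomial.C)) i j := by
      rw [← hQmH, hQmH2]
    rw [Matrix.smul_apply, Matrix.smul_apply, smul_eq_mul, smul_eq_mul] at h1
    exact mul_left_cancel₀ hqne h1
  have hfinal : ∀ z : ℂ, (∑ n ∈ Finset.range (N + 1), z ^ n • A n) =
      (∑ n ∈ Finset.range (N + 1), z ^ n • B n) * U := by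
    intro z
    have h1 := congrArg (fun M : Matrix (Fin m) (Fin m) (Polynomial ℂ) =>
      M.map (Polynomial.eval z)) hPQU
    rw [spec_map_mul, hPev, hQev] at h1
    have h2 : (U.map Polynomial.C).map (Polynomial.eval z) = U := by
      ext i j
      simp [Matrix.map_apply]
    rw [h2] at h1
    exact h1
  -- unitarity
  obtain ⟨z1, hz11, hz1good⟩ := spec_exists_circle_avoid _ hpos
  have hSpd1 : (S z1).PosDef := by
    by_contra hnpd
    exact hz1good ⟨hz11, hnpd⟩
  obtain ⟨hSA1, hSB1, hdetSB1⟩ := hfac z1 hz11 hSpd1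
  have hUu : U * Uᴴ = 1 :=
    spec_unitary_of_fac _ _ U hdetSB1 (by rw [← hSA1, ← hSB1]) (hfinal z1)
  exact ⟨U, hUu, hfinal⟩
end

section
/- (Fejér–Riesz lemma, the scalar case m = 1.) Let s(z) = ∑_{n=-N}^{N} c_n z^n be a scalar Laurent polynomial with complex coefficients such that s(z) is a positive real number for all but finitely many z on the unit circle. Then there exists a polynomial p(z) = ∑_{n=0}^{N} a_n z^n with complex coefficients, having no zeros in the open unit disk {|z| < 1}, such that s(z) = p(z) · conj(p(1/conj(z))) = (∑_{n=0}^{N} a_n z^n)(∑_{n=0}^{N} conj(a_n) z^{-n}) for every z ∈ ℂ \ {0}. -/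
open scoped BigOperators

open Polynomial Filter Topology

lemma aux_half (s : Multiset ℂ) (h : ∀ a : ℂ, Even (s.count a)) :
    ∃ t : Multiset ℂ, t + t = s ∧ t ≤ s := by
  classical
  induction s using Multiset.strongInductionOn with
  | ih s ih =>
    rcases s.empty_or_exists_mem with rfl | ⟨a, ha⟩
    · exact ⟨0, rfl, le_rfl⟩
    · have h2 : 2 ≤ s.count a := by
        have h1 : 1 ≤ s.count a := Multiset.one_le_count_iff_mem.2 ha
        rcases h a with ⟨m, hm⟩; omega
      obtain ⟨u, hu⟩ : ∃ u, s = Multiset.replicate 2 a + u := by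
        have := (Multiset.le_count_iff_replicate_le).1 h2
        exact Multiset.le_iff_exists_add.1 this
      have hu2 : s = a ::ₘ a ::ₘ u := by
        rw [hu, Multiset.replicate_succ, Multiset.replicate_one, Multiset.cons_add, Multiset.singleton_add]
      have hcu : ∀ b : ℂ, Even (u.count b) := by
        intro b
        have := h b
        rw [hu, Multiset.count_add, Multiset.count_replicate] at this
        by_cases hb : a = b
        · subst hb; simp at this; rcases this with ⟨m, hm⟩; exact ⟨m - 1, by omega⟩
        · simpa [hb] using this
      have hlt : u < s := by
        rw [hu2]
        calc u < a ::ₘ u := Multiset.lt_cons_self u a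
        _ ≤ a ::ₘ a ::ₘ u := Multiset.cons_le_cons a (Multiset.le_cons_self u a)
      obtain ⟨t, ht, hts⟩ := ih u hlt hcu
      refine ⟨a ::ₘ t, ?_, ?_⟩
      · rw [hu2, ← ht]
        rw [Multiset.cons_add, Multiset.add_cons]
      · rw [hu2]
        exact Multiset.cons_le_cons a (hts.trans ((Multiset.le_cons_self u a)))

lemma aux_reflect_pow (f : ℂ[X]) (hf : f.natDegree ≤ 1) (m : ℕ) :
    reflect m (f ^ m) = (reflect 1 f) ^ m := by
  induction m with
  | zero => simp
  | succ n ihn =>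
      have h1 : (f ^ n).natDegree ≤ n := by
        calc (f ^ n).natDegree ≤ n * f.natDegree := natDegree_pow_le
        _ ≤ n * 1 := by exact Nat.mul_le_mul_left n hf
        _ = n := by ring
      calc reflect (n + 1) (f ^ (n+1)) = reflect (n + 1) (f ^ n * f) := by rw [pow_succ]
      _ = reflect n (f ^ n) * reflect 1 f := reflect_mul _ _ h1 hf
      _ = (reflect 1 f) ^ n * reflect 1 f := by rw [ihn]
      _ = (reflect 1 f) ^ (n + 1) := by ring

lemma aux_reflect_linear (a : ℂ) : reflect 1 (X - C a) = 1 - C a * X := by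
  ext i
  rw [coeff_reflect]
  rcases i with _ | _ | i <;>
    simp [revAt_le, revAt_eq_self_of_lt, coeff_one, coeff_X, coeff_C]

lemma aux_pair (Np : ℕ) (q : ℂ[X]) (hq0 : q ≠ 0) (hdeg : q.natDegree ≤ Np)
    (hrefl : reflect Np (q.map (starRingEnd ℂ)) = q) (ρ : ℂ) (hρ : ρ ≠ 0) :
    rootMultiplicity ρ q ≤ rootMultiplicity ((starRingEnd ℂ) ρ)⁻¹ q := by
  set m := rootMultiplicity ρ q with hm
  obtain ⟨u, hu⟩ : (X - C ρ) ^ m ∣ q := pow_rootMultiplicity_dvd q ρ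
  have hXm : ((X : ℂ[X]) - C ρ) ^ m ≠ 0 := pow_ne_zero _ (X_sub_C_ne_zero ρ)
  have hmle : m ≤ Np := by
    have h1 : (((X : ℂ[X]) - C ρ) ^ m).natDegree ≤ q.natDegree := natDegree_le_of_dvd (pow_rootMultiplicity_dvd q ρ) hq0
    rw [natDegree_pow, natDegree_X_sub_C] at h1
    omega
  have hu0 : u ≠ 0 := by rintro rfl; simp at hu; exact hq0 hu
  have hqmap : q.map (starRingEnd ℂ) = (X - C ((starRingEnd ℂ) ρ)) ^ m * u.map (starRingEnd ℂ) := by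
    rw [hu]; simp [Polynomial.map_mul, Polynomial.map_pow, Polynomial.map_sub]
  have hdu : (u.map (starRingEnd ℂ)).natDegree ≤ Np - m := by
    have h1 : (u.map (starRingEnd ℂ)).natDegree = u.natDegree := natDegree_map_eq_of_injective (RingHom.injective _) u
    have h2 : q.natDegree = m + u.natDegree := by
      rw [hu, natDegree_mul hXm hu0]
      · congr 1
        simp [natDegree_pow]
    omega
  have hdlin : ((X : ℂ[X]) - C ((starRingEnd ℂ) ρ)).natDegree ≤ 1 := by
    simp [natDegree_X_sub_C]
  have key : q = (reflect 1 (X - C ((starRingEnd ℂ) ρ))) ^ m * reflect (Np - m) (u.map (starRingEnd ℂ)) := by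
    rw [← aux_reflect_pow _ hdlin m]
    rw [← reflect_mul _ _ (by
        calc ((X - C ((starRingEnd ℂ) ρ)) ^ m).natDegree ≤ m * 1 := le_trans natDegree_pow_le (Nat.mul_le_mul_left m hdlin)
        _ = m := by ring) hdu]
    rw [show m + (Np - m) = Np from by omega, ← hqmap, hrefl]
  have hfac : reflect 1 (X - C ((starRingEnd ℂ) ρ)) = C (-(starRingEnd ℂ) ρ) * (X - C ((starRingEnd ℂ) ρ)⁻¹) := by
    rw [aux_reflect_linear, map_neg]
    have hρ' : (starRingEnd ℂ) ρ ≠ 0 := by simpa using hρ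
    have hC : C ((starRingEnd ℂ) ρ) * C (((starRingEnd ℂ) ρ))⁻¹ = 1 := by
      rw [← C_mul, mul_inv_cancel₀ hρ', C_1]
    linear_combination -hC
  have hdvd : (X - C ((starRingEnd ℂ) ρ)⁻¹) ^ m ∣ q := by
    refine ⟨C (-(starRingEnd ℂ) ρ) ^ m * reflect (Np - m) (u.map (starRingEnd ℂ)), ?_⟩
    rw [key, hfac, mul_pow]
    ring
  exact (le_rootMultiplicity_iff hq0).2 hdvd

lemma aux_inj_exp (z0 : ℂ) (hz0 : z0 ≠ 0) :
    Set.InjOn (fun θ : ℝ => z0 * Complex.exp (θ * Complex.I)) (Set.Ioo 0 1) := by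
  intro θ1 h1 θ2 h2 heq
  simp only [mul_right_inj' hz0] at heq
  obtain ⟨n, hn⟩ := Complex.exp_eq_exp_iff_exists_int.1 heq
  have him := congrArg Complex.im hn
  simp [Complex.add_im, Complex.mul_im, Complex.mul_re, Complex.I_re, Complex.I_im,
    Complex.ofReal_re, Complex.ofReal_im, Complex.intCast_re, Complex.intCast_im] at him
  -- him : θ1 = θ2 + n * (2 * π) (hopefully)
  have hπ := Real.pi_gt_three
  have hn0 : n = 0 := by
    by_contra hne
    have h1' : (1:ℝ) ≤ |(n:ℝ)| := by exact_mod_cast Int.one_le_abs (by omega)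
    rcases abs_cases (n:ℝ) with ⟨ha, _⟩ | ⟨ha, _⟩ <;> nlinarith [h1.1, h1.2, h2.1, h2.2]
  rw [hn0] at him
  simpa using him

lemma aux_circle_infinite : {z : ℂ | ‖z‖ = 1}.Infinite := by
  have h1 : (Set.Ioo (0:ℝ) 1).Infinite := Set.Ioo_infinite (by norm_num)
  have h2 := h1.image (aux_inj_exp 1 one_ne_zero)
  apply h2.mono
  rintro w ⟨θ, _, rfl⟩
  simp [Complex.norm_exp_ofReal_mul_I]

lemma auxA (N : ℕ) (c : ℤ → ℂ) (s : ℂ → ℂ)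
    (hs : ∀ z : ℂ, z ≠ 0 → s z = ∑ n ∈ Finset.Icc (-(N : ℤ)) (N : ℤ), c n * z ^ n)
    (hpos : {z : ℂ | ‖z‖ = 1 ∧ ¬ (∃ r : ℝ, 0 < r ∧ s z = (r : ℂ))}.Finite) :
    ∀ z : ℂ, ‖z‖ = 1 → (s z).im = 0 ∧ 0 ≤ (s z).re := by
  have hS : IsClosed {w : ℂ | w.im = 0 ∧ 0 ≤ w.re} :=
    (isClosed_eq Complex.continuous_im continuous_const).inter
      (isClosed_le continuous_const Complex.continuous_re)
  intro z0 hz0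
  have hz0ne : z0 ≠ 0 := by intro h; rw [h] at hz0; simp at hz0
  set e : ℝ → ℂ := fun θ => z0 * Complex.exp (θ * Complex.I) with he
  have hecont : Continuous e := by
    exact continuous_const.mul (Complex.continuous_exp.comp (by continuity))
  have he0 : e 0 = z0 := by simp [he]
  have hene : ∀ θ, e θ ≠ 0 := fun θ => mul_ne_zero hz0ne (Complex.exp_ne_zero _)
  have heabs : ∀ θ, ‖(e θ)‖ = 1 := by
    intro θ; rw [he]; simp [map_mul, hz0, Complex.norm_exp_ofReal_mul_I]
  set F : ℂ → ℂ := fun z => ∑ n ∈ Finset.Icc (-(N : ℤ)) (N : ℤ), c n * z ^ n with hF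
  have hFt : Tendsto F (𝓝 z0) (𝓝 (F z0)) := by
    apply tendsto_finset_sum
    intro n _
    exact Filter.Tendsto.const_mul _ (continuousAt_zpow₀ z0 n (Or.inl hz0ne))
  have htend : Tendsto (fun θ => s (e θ)) (𝓝[>] (0:ℝ)) (𝓝 (s z0)) := by
    have h1 : Tendsto (fun θ => F (e θ)) (𝓝 (0:ℝ)) (𝓝 (F z0)) := by
      apply hFt.comp
      have := hecont.tendsto 0
      rwa [he0] at this
    have h2 : Tendsto (fun θ => s (e θ)) (𝓝 (0:ℝ)) (𝓝 (F z0)) := by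
      apply h1.congr
      intro θ; exact (hs (e θ) (hene θ)).symm
    rw [hs z0 hz0ne]
    exact h2.mono_left nhdsWithin_le_nhds
  set B := {z : ℂ | ‖z‖ = 1 ∧ ¬ (∃ r : ℝ, 0 < r ∧ s z = (r : ℂ))} with hB
  set Θ := Set.Ioo (0:ℝ) 1 ∩ e ⁻¹' B with hΘdef
  have hΘ : Θ.Finite := by
    apply Set.Finite.of_finite_image (f := e)
    · apply hpos.subset
      rintro w ⟨θ, ⟨_, hθB⟩, rfl⟩
      exact hθB
    · exact (aux_inj_exp z0 hz0ne).mono Set.inter_subset_left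
  have hev : ∀ᶠ θ in 𝓝[>] (0:ℝ), (s (e θ)).im = 0 ∧ 0 ≤ (s (e θ)).re := by
    have h1 : ∀ᶠ θ in 𝓝[>] (0:ℝ), θ ∈ Set.Ioo (0:ℝ) 1 :=
      Ioo_mem_nhdsGT_of_mem ⟨le_refl 0, zero_lt_one⟩
    have h2 : ∀ᶠ θ in 𝓝[>] (0:ℝ), θ ∉ Θ := by
      have h0 : (0:ℝ) ∉ Θ := fun h => (lt_irrefl 0 h.1.1)
      have : Θᶜ ∈ 𝓝 (0:ℝ) := hΘ.isClosed.isOpen_compl.mem_nhds h0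
      exact eventually_nhdsWithin_of_eventually_nhds this
    filter_upwards [h1, h2] with θ hθ1 hθ2
    obtain ⟨r, hr0, hsr⟩ : ∃ r : ℝ, 0 < r ∧ s (e θ) = r := by
      by_contra hc
      exact hθ2 ⟨hθ1, heabs θ, hc⟩
    rw [hsr]
    simp [le_of_lt hr0]
  exact hS.mem_of_tendsto htend hev

section
open Complex in
lemma aux_even (Nn : ℕ) (q : ℂ[X]) (hq0 : q ≠ 0) (s : ℂ → ℂ)
    (heval : ∀ z : ℂ, z ≠ 0 → q.eval z = z ^ Nn * s z)
    (hA : ∀ z : ℂ, ‖z‖ = 1 → (s z).im = 0 ∧ 0 ≤ (s z).re)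
    (ρ : ℂ) (hρ : ‖ρ‖ = 1) : Even (rootMultiplicity ρ q) := by
  by_contra hodd
  rw [Nat.not_even_iff_odd] at hodd
  set m := rootMultiplicity ρ q with hm
  set g := q /ₘ (X - C ρ) ^ m with hg
  have hfac : (X - C ρ) ^ m * g = q := pow_mul_divByMonic_rootMultiplicity_eq q ρ
  have hgρ : g.eval ρ ≠ 0 := eval_divByMonic_pow_rootMultiplicity_ne_zero ρ hq0
  have hρne : ρ ≠ 0 := by intro h; rw [h] at hρ; simp at hρ
  set e : ℝ → ℂ := fun θ => ρ * Complex.exp (θ * I) with he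
  have hene : ∀ θ, e θ ≠ 0 := fun θ => mul_ne_zero hρne (Complex.exp_ne_zero _)
  have heabs : ∀ θ, ‖(e θ)‖ = 1 := by
    intro θ; rw [he]; simp [map_mul, hρ, Complex.norm_exp_ofReal_mul_I]
  have he0 : e 0 = ρ := by simp [he]
  have hecont : Continuous e := continuous_const.mul (Complex.continuous_exp.comp (by continuity))
  -- identity
  have hid : ∀ θ : ℝ, s (e θ) = ρ ^ m * (Complex.exp (θ * I) - 1) ^ m * g.eval (e θ) / (e θ) ^ Nn := by
    intro θ
    have h1 := heval (e θ) (hene θ)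
    rw [← hfac, eval_mul, eval_pow, eval_sub, eval_X, eval_C] at h1
    have h2 : e θ - ρ = ρ * (Complex.exp (θ * I) - 1) := by rw [he]; ring
    rw [h2, mul_pow] at h1
    field_simp [pow_ne_zero Nn (hene θ)]
    linear_combination -h1
  -- limit of the difference quotient
  have hE : Tendsto (fun θ : ℝ => (Complex.exp ((θ:ℂ) * I) - 1) / ((θ:ℂ) * I)) (𝓝[≠] (0:ℝ)) (𝓝 1) := by
    have hd : HasDerivAt Complex.exp 1 0 := by simpa using Complex.hasDerivAt_exp 0
    have hslope := hasDerivAt_iff_tendsto_slope.1 hd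
    have hmap : Tendsto (fun θ : ℝ => (θ:ℂ) * I) (𝓝[≠] (0:ℝ)) (𝓝[≠] (0:ℂ)) := by
      have hc : Tendsto (fun θ : ℝ => (θ:ℂ) * I) (𝓝 (0:ℝ)) (𝓝 (0:ℂ)) := by
        have : Continuous fun θ : ℝ => (θ:ℂ) * I := by continuity
        simpa using this.tendsto 0
      apply tendsto_nhdsWithin_of_tendsto_nhds_of_eventually_within _
        (hc.mono_left nhdsWithin_le_nhds)
      filter_upwards [self_mem_nhdsWithin] with θ hθ
      have : (θ:ℝ) ≠ 0 := hθ
      simp only [Set.mem_compl_iff, Set.mem_singleton_iff]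
      exact mul_ne_zero (Complex.ofReal_ne_zero.2 this) Complex.I_ne_zero
    have hcomp := hslope.comp hmap
    apply hcomp.congr'
    filter_upwards [self_mem_nhdsWithin] with θ hθ
    simp [slope_def_field, Function.comp]
  set L := ρ ^ m * I ^ m * g.eval ρ / ρ ^ Nn with hL
  have hLne : L ≠ 0 := by
    apply div_ne_zero
    · exact mul_ne_zero (mul_ne_zero (pow_ne_zero _ hρne) (pow_ne_zero _ I_ne_zero)) hgρ
    · exact pow_ne_zero _ hρne
  set G : ℝ → ℂ := fun θ => s (e θ) / ((θ:ℂ)) ^ m with hG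
  have hGt : Tendsto G (𝓝[≠] (0:ℝ)) (𝓝 L) := by
    have hge : Tendsto (fun θ : ℝ => g.eval (e θ)) (𝓝[≠] (0:ℝ)) (𝓝 (g.eval ρ)) := by
      have h := ((g.continuous.comp hecont).tendsto 0).mono_left
        (nhdsWithin_le_nhds (s := {(0:ℝ)}ᶜ))
      rwa [Function.comp, he0] at h
    have hpow : Tendsto (fun θ : ℝ => (e θ) ^ Nn) (𝓝[≠] (0:ℝ)) (𝓝 (ρ ^ Nn)) := by
      have h := (((hecont.pow Nn).tendsto 0)).mono_left
        (nhdsWithin_le_nhds (s := {(0:ℝ)}ᶜ))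
      rwa [Pi.pow_apply, he0] at h
    have hnum : Tendsto
        (fun θ : ℝ => ρ ^ m * ((Complex.exp ((θ:ℂ) * I) - 1) / ((θ:ℂ) * I)) ^ m * I ^ m
          * g.eval (e θ)) (𝓝[≠] (0:ℝ))
        (𝓝 (ρ ^ m * (1:ℂ) ^ m * I ^ m * g.eval ρ)) := by
      exact (((hE.pow m).const_mul (ρ ^ m)).mul_const (I ^ m)).mul hge
    have h1 := hnum.div hpow (pow_ne_zero _ hρne)
    have h2 : Tendsto G (𝓝[≠] (0:ℝ))
        (𝓝 (ρ ^ m * (1:ℂ) ^ m * I ^ m * g.eval ρ / ρ ^ Nn)) := by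
      apply h1.congr'
      filter_upwards [self_mem_nhdsWithin] with θ hθ
      have hθne : (θ:ℝ) ≠ 0 := hθ
      have hθC : (θ:ℂ) ≠ 0 := Complex.ofReal_ne_zero.2 hθne
      rw [hG]
      simp only
      simp only [Pi.div_apply]
      rw [hid θ]
      have hstep : ρ ^ m * ((Complex.exp ((θ:ℂ) * I) - 1) / ((θ:ℂ) * I)) ^ m * I ^ m
            * g.eval (e θ)
          = ρ ^ m * (Complex.exp ((θ:ℂ) * I) - 1) ^ m * g.eval (e θ) / (θ:ℂ) ^ m := by
        rw [div_pow, mul_pow]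
        field_simp
      rw [hstep, div_div, div_div, mul_comm ((θ:ℂ) ^ m) (e θ ^ Nn)]
    simpa [hL] using h2
  -- right limit: nonneg reals
  have hIoiLe : 𝓝[>] (0:ℝ) ≤ 𝓝[≠] (0:ℝ) := nhdsWithin_mono 0 (fun x hx => ne_of_gt hx)
  have hIioLe : 𝓝[<] (0:ℝ) ≤ 𝓝[≠] (0:ℝ) := nhdsWithin_mono 0 (fun x hx => ne_of_lt hx)
  have hreal : ∀ θ : ℝ, θ ≠ 0 → G θ = (((s (e θ)).re / θ ^ m : ℝ) : ℂ) := by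
    intro θ hθ
    obtain ⟨him, _⟩ := hA (e θ) (heabs θ)
    have hseq : s (e θ) = ((s (e θ)).re : ℂ) := by
      apply Complex.ext <;> simp [him]
    rw [hG]
    simp only
    rw [hseq]
    push_cast
    rfl
  have hSnn : IsClosed {w : ℂ | w.im = 0 ∧ 0 ≤ w.re} :=
    (isClosed_eq Complex.continuous_im continuous_const).inter
      (isClosed_le continuous_const Complex.continuous_re)
  have hSnp : IsClosed {w : ℂ | w.im = 0 ∧ w.re ≤ 0} :=
    (isClosed_eq Complex.continuous_im continuous_const).inter
      (isClosed_le Complex.continuous_re continuous_const)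
  have hLnn : L ∈ {w : ℂ | w.im = 0 ∧ 0 ≤ w.re} := by
    apply hSnn.mem_of_tendsto (hGt.mono_left hIoiLe)
    filter_upwards [self_mem_nhdsWithin] with θ hθ
    have hθ0 : (0:ℝ) < θ := hθ
    rw [hreal θ (ne_of_gt hθ0)]
    refine ⟨Complex.ofReal_im _, ?_⟩
    rw [Complex.ofReal_re]
    exact div_nonneg (hA (e θ) (heabs θ)).2 (le_of_lt (pow_pos hθ0 m))
  have hLnp : L ∈ {w : ℂ | w.im = 0 ∧ w.re ≤ 0} := by
    apply hSnp.mem_of_tendsto (hGt.mono_left hIioLe)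
    filter_upwards [self_mem_nhdsWithin] with θ hθ
    have hθ0 : θ < 0 := hθ
    rw [hreal θ (ne_of_lt hθ0)]
    refine ⟨Complex.ofReal_im _, ?_⟩
    rw [Complex.ofReal_re]
    apply div_nonpos_of_nonneg_of_nonpos (hA (e θ) (heabs θ)).2
    exact le_of_lt (hodd.pow_neg hθ0)
  apply hLne
  apply Complex.ext
  · simp [le_antisymm hLnp.2 hLnn.2]
  · simp [hLnn.1]
end

/-- **Fejér–Riesz lemma** (scalar spectral factorization on the unit circle).
If `s(z) = ∑_{n=-N}^N c_n z^n` is a scalar Laurent polynomial taking positive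
real values at all but finitely many points of the unit circle, then
`s(z) = p(z) · conj(p(1/conj z))` for all `z ≠ 0`, where
`p(z) = ∑_{n=0}^N a_n z^n` has no zeros in the open unit disk. -/
theorem fejer_riesz
    (N : ℕ) (hN : 0 < N)
    (c : ℤ → ℂ)
    (s : ℂ → ℂ)
    (hs : ∀ z : ℂ, z ≠ 0 → s z = ∑ n ∈ Finset.Icc (-(N : ℤ)) (N : ℤ), c n * z ^ n)
    (hpos : {z : ℂ | ‖z‖ = 1 ∧
      ¬ (∃ r : ℝ, 0 < r ∧ s z = (r : ℂ))}.Finite) :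
    ∃ a : ℕ → ℂ,
      (∀ z : ℂ, ‖z‖ < 1 → (∑ n ∈ Finset.range (N + 1), a n * z ^ n) ≠ 0) ∧
      (∀ z : ℂ, z ≠ 0 →
        s z = (∑ n ∈ Finset.range (N + 1), a n * z ^ n) *
              (∑ n ∈ Finset.range (N + 1), (starRingEnd ℂ) (a n) * z ^ (-(n : ℤ)))) := by
  classical
  set q : ℂ[X] := ∑ j ∈ Finset.range (2*N+1), monomial j (c ((j:ℤ) - N)) with hqdef
  have hcoeff : ∀ j : ℕ, q.coeff j = if j < 2*N+1 then c ((j:ℤ) - N) else 0 := by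
    intro j
    rw [hqdef, finset_sum_coeff]
    simp only [coeff_monomial]
    rw [Finset.sum_ite_eq' (Finset.range (2*N+1)) j]
    simp [Finset.mem_range]
  have heval : ∀ z : ℂ, z ≠ 0 → q.eval z = z ^ N * s z := by
    intro z hz
    rw [hs z hz, Finset.mul_sum, hqdef, eval_finset_sum]
    simp only [eval_monomial]
    refine Finset.sum_nbij' (i := fun j => (j:ℤ) - N) (j := fun n => (n + N).toNat)
      ?_ ?_ ?_ ?_ ?_
    · intro j hj
      rw [Finset.mem_range] at hj
      rw [Finset.mem_Icc]
      omega
    · intro n hn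
      rw [Finset.mem_Icc] at hn
      rw [Finset.mem_range]
      omega
    · intro j hj
      rw [Finset.mem_range] at hj
      omega
    · intro n hn
      rw [Finset.mem_Icc] at hn
      omega
    · intro j hj
      rw [Finset.mem_range] at hj
      have hzz : z ^ ((j:ℤ) - N) * z ^ (N:ℕ) = z ^ (j:ℕ) := by
        rw [← zpow_natCast z N, ← zpow_add₀ hz, ← zpow_natCast z j]
        congr 1
        omega
      rw [← hzz]
      ring
  have hA := auxA N c s hs hpos
  have hq0 : q ≠ 0 := by
    intro h
    apply aux_circle_infinite
    apply Set.Finite.subset hpos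
    intro z hz
    refine ⟨hz, ?_⟩
    rintro ⟨r, hr, hsz⟩
    have hzne : z ≠ 0 := by intro h0; rw [h0] at hz; simp at hz
    have h2 := heval z hzne
    rw [h, eval_zero] at h2
    have hsz0 : s z = 0 := (mul_eq_zero.mp h2.symm).resolve_left (pow_ne_zero _ hzne)
    rw [hsz0] at hsz
    have : r = 0 := by exact_mod_cast hsz.symm
    linarith
  have hdeg2N : q.natDegree ≤ 2*N := by
    apply natDegree_le_iff_coeff_eq_zero.2
    intro j hj
    rw [hcoeff j, if_neg (by omega)]
  -- symmetry
  set q' : ℂ[X] := ∑ j ∈ Finset.range (2*N+1), monomial j ((starRingEnd ℂ) (c ((N:ℤ) - j)))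
    with hq'def
  have hcoeff' : ∀ j : ℕ, q'.coeff j = if j < 2*N+1 then (starRingEnd ℂ) (c ((N:ℤ) - j)) else 0 := by
    intro j
    rw [hq'def, finset_sum_coeff]
    simp only [coeff_monomial]
    rw [Finset.sum_ite_eq' (Finset.range (2*N+1)) j]
    simp [Finset.mem_range]
  have hqq' : q = q' := by
    rw [← sub_eq_zero]
    apply eq_zero_of_infinite_isRoot
    apply aux_circle_infinite.mono
    intro z hz
    have hzne : z ≠ 0 := by intro h0; rw [h0] at hz; simp at hz
    have hzinv : z⁻¹ = (starRingEnd ℂ) z := Complex.inv_eq_conj hz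
    have hsreal : (starRingEnd ℂ) (s z) = s z := by
      rw [Complex.conj_eq_iff_im]
      exact (hA z hz).1
    simp only [Set.mem_setOf_eq, IsRoot, eval_sub, sub_eq_zero]
    -- q.eval z = q'.eval z
    have h1 : (starRingEnd ℂ) (q.eval z) = ∑ j ∈ Finset.range (2*N+1),
        (starRingEnd ℂ) (c ((j:ℤ) - N)) * (z⁻¹) ^ j := by
      rw [hqdef, eval_finset_sum, map_sum]
      congr 1
      funext j
      rw [eval_monomial, map_mul, map_pow, hzinv]
    have h2 : (starRingEnd ℂ) (q.eval z) = (z⁻¹) ^ N * s z := by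
      rw [heval z hzne, map_mul, map_pow, hzinv, hsreal]
    have h3 : q'.eval z = z ^ (2*N) * ((starRingEnd ℂ) (q.eval z)) := by
      rw [h1, hq'def, eval_finset_sum, Finset.mul_sum]
      rw [← Finset.sum_range_reflect]
      apply Finset.sum_congr rfl
      intro j hj
      rw [Finset.mem_range] at hj
      rw [eval_monomial]
      have hc : (N:ℤ) - ((2*N+1-1-j:ℕ):ℤ) = (j:ℤ) - N := by omega
      rw [hc, show (2*N+1-1-j) = 2*N - j from by omega]
      have hp : z ^ (2*N) * (z⁻¹)^j = z^(2*N - j) := by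
        rw [show 2*N = (2*N - j) + j from by omega, pow_add, mul_assoc, ← mul_pow,
          mul_inv_cancel₀ hzne, one_pow, mul_one]
        congr 1
        omega
      rw [← hp]
      ring
    rw [h3, h2, heval z hzne]
    have hpN : z ^ (2*N) * (z⁻¹)^N = z ^ N := by
      rw [show 2*N = N + N from by omega, pow_add, mul_assoc, ← mul_pow,
        mul_inv_cancel₀ hzne, one_pow, mul_one]
    rw [← mul_assoc, hpN]
  -- reflection identity
  have hrefl : reflect (2*N) (q.map (starRingEnd ℂ)) = q := by
    ext j
    rw [coeff_reflect, coeff_map]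
    by_cases hj : j ≤ 2*N
    · rw [revAt_le hj]
      rw [hcoeff (2*N - j)]
      rw [if_pos (by omega)]
      conv_rhs => rw [hqq']
      rw [hcoeff' j, if_pos (by omega)]
      congr 2
      omega
    · rw [revAt_eq_self_of_lt (by omega), hcoeff j, if_neg (by omega), map_zero]
  have hpair : ∀ ρ : ℂ, ρ ≠ 0 →
      rootMultiplicity ρ q = rootMultiplicity ((starRingEnd ℂ) ρ)⁻¹ q := by
    intro ρ hρ
    have h1 := aux_pair (2*N) q hq0 hdeg2N hrefl ρ hρ
    have hσρ : ((starRingEnd ℂ) ρ)⁻¹ ≠ 0 := by simp [hρ]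
    have h2 := aux_pair (2*N) q hq0 hdeg2N hrefl _ hσρ
    have hσσ : ((starRingEnd ℂ) (((starRingEnd ℂ) ρ)⁻¹))⁻¹ = ρ := by
      rw [map_inv₀, inv_inv, Complex.conj_conj]
    rw [hσσ] at h2
    omega
  have heven : ∀ ρ : ℂ, ‖ρ‖ = 1 → Even (rootMultiplicity ρ q) :=
    fun ρ h => aux_even N q hq0 s heval hA ρ h
  -- trailing degree
  set k := rootMultiplicity 0 q with hkdef
  have hlow : ∀ j, j < k → q.coeff j = 0 := by
    have h := pow_rootMultiplicity_dvd q 0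
    rw [map_zero, sub_zero] at h
    exact X_pow_dvd_iff.1 h
  have hkc : q.coeff k ≠ 0 := by
    intro h
    apply pow_rootMultiplicity_not_dvd hq0 (0:ℂ)
    rw [map_zero, sub_zero, X_pow_dvd_iff]
    intro d hd
    rcases Nat.lt_or_ge d k with h1 | h1
    · exact hlow d h1
    · rw [show d = k from by omega]
      exact h
  have hk2N : k ≤ 2*N := by
    by_contra hcon
    apply hq0
    ext j
    rw [coeff_zero]
    by_cases hj : j < 2*N+1
    · exact hlow j (by omega)
    · rw [hcoeff j, if_neg (by omega)]
  have hsymc : ∀ j, j ≤ 2*N → q.coeff j = (starRingEnd ℂ) (q.coeff (2*N - j)) := by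
    intro j hj
    rw [hcoeff (2*N - j), if_pos (by omega)]
    conv_lhs => rw [hqq']
    rw [hcoeff' j, if_pos (by omega)]
    congr 2
    omega
  have hnd : q.natDegree = 2*N - k := by
    apply le_antisymm
    · apply natDegree_le_iff_coeff_eq_zero.2
      intro j hj
      by_cases hj2 : j ≤ 2*N
      · rw [hsymc j hj2, hlow (2*N - j) (by omega), map_zero]
      · rw [hcoeff j, if_neg (by omega)]
    · apply le_natDegree_of_ne_zero
      rw [hsymc (2*N - k) (by omega), show 2*N - (2*N - k) = k from by omega]
      simpa using hkc
  have hkN : k ≤ N := by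
    have : k ≤ q.natDegree := le_natDegree_of_ne_zero hkc
    omega
  -- roots
  set R := q.roots with hRdef
  have hcount : ∀ ρ, R.count ρ = rootMultiplicity ρ q := fun ρ => count_roots q
  set lead := q.leadingCoeff with hleaddef
  have hsplits : q = C lead * (R.map (fun ρ => X - C ρ)).prod :=
    (IsAlgClosed.splits q).eq_prod_roots
  have hcardR : Multiset.card R = 2*N - k := by
    have h1 := (IsAlgClosed.splits q).natDegree_eq_card_roots
    rw [← hRdef] at h1
    omega
  set σfun : ℂ → ℂ := fun w => ((starRingEnd ℂ) w)⁻¹ with hσfun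
  have hσ0 : σfun 0 = 0 := by simp [hσfun]
  have hσinv : Function.Involutive σfun := by
    intro w
    simp [hσfun, map_inv₀]
  have hinj : Function.Injective σfun := hσinv.injective
  have hσabs : ∀ w, ‖(σfun w)‖ = (‖w‖)⁻¹ := by
    intro w
    simp [hσfun, map_inv₀]
  have hσcirc : ∀ w : ℂ, ‖w‖ = 1 → σfun w = w := by
    intro w hw
    have h1 : w * (starRingEnd ℂ) w = 1 := by
      rw [Complex.mul_conj]
      norm_cast
      rw [Complex.normSq_eq_norm_sq, hw]
      norm_num
    rw [hσfun]
    simp only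
    rw [← inv_eq_of_mul_eq_one_right h1, inv_inv]
  set Ron := R.filter (fun ρ => ‖ρ‖ = 1) with hRonDef
  set Rout := R.filter (fun ρ => 1 < ‖ρ‖) with hRoutDef
  set Rin := R.filter (fun ρ => ρ ≠ 0 ∧ ‖ρ‖ < 1) with hRinDef
  set R0 := R.filter (fun ρ => ρ = (0:ℂ)) with hR0Def
  have hpart : R0 + Rin + Ron + Rout = R := by
    ext x
    simp only [Multiset.count_add, hRonDef, hRoutDef, hRinDef, hR0Def, Multiset.count_filter]
    rcases eq_or_ne x 0 with rfl | hx
    · have h0 : ‖(0:ℂ)‖ = 0 := by simp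
      rw [if_pos rfl, if_neg (by simp), if_neg (by rw [h0]; norm_num), if_neg (by rw [h0]; norm_num)]
      omega
    · rw [if_neg hx]
      rcases lt_trichotomy (‖x‖) 1 with h|h|h
      · rw [if_pos ⟨hx, h⟩, if_neg h.ne, if_neg (not_lt.2 h.le)]
        omega
      · rw [if_neg (by rintro ⟨-, hlt⟩; rw [h] at hlt; exact lt_irrefl 1 hlt), if_pos h,
          if_neg (by rw [h]; exact lt_irrefl 1)]
        omega
      · rw [if_neg (by rintro ⟨-, hlt⟩; exact absurd h (not_lt.2 hlt.le)),
          if_neg (fun hc => absurd h (by rw [hc]; exact lt_irrefl 1)), if_pos h]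
        omega
  have hcount_pair : ∀ x : ℂ, x ≠ 0 → R.count (σfun x) = R.count x := by
    intro x hx
    rw [hcount, hcount, ← hpair x hx]
  have hRonEven : ∀ a : ℂ, Even (Ron.count a) := by
    intro a
    rw [hRonDef, Multiset.count_filter]
    by_cases ha : ‖a‖ = 1
    · rw [if_pos ha, hcount]
      exact heven a ha
    · rw [if_neg ha]
      exact Even.zero
  obtain ⟨H, hH, hHle⟩ := aux_half Ron hRonEven
  have hHmem : ∀ x ∈ H, ‖x‖ = 1 := by
    intro x hx
    have := Multiset.mem_of_le hHle hx
    rw [hRonDef] at this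
    exact (Multiset.mem_filter.1 this).2
  have hσH : H.map σfun = H := by
    have h1 : H.map σfun = H.map id := Multiset.map_congr rfl (fun x hx => hσcirc x (hHmem x hx))
    rw [h1, Multiset.map_id]
  have hσout : Rout.map σfun = Rin := by
    ext x
    have h1 : Multiset.count x (Rout.map σfun) = Multiset.count (σfun x) Rout := by
      conv_lhs => rw [show x = σfun (σfun x) from (hσinv x).symm]
      exact Multiset.count_map_eq_count' σfun Rout hinj (σfun x)
    rw [h1, hRoutDef, hRinDef, Multiset.count_filter, Multiset.count_filter]
    rcases eq_or_ne x 0 with rfl | hx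
    · have h00 : ‖(0:ℂ)‖ = 0 := norm_zero
      rw [hσ0, if_neg (by rw [h00]; norm_num), if_neg (by simp)]
    · have habs := hσabs x
      have habspos : 0 < ‖x‖ := by
        simp [hx]
      by_cases hlt : ‖x‖ < 1
      · rw [if_pos (by rw [habs]; exact (one_lt_inv₀ habspos).2 hlt), if_pos ⟨hx, hlt⟩,
          hcount_pair x hx]
      · rw [if_neg ?_, if_neg (by tauto)]
        rw [habs]
        intro hcon
        have h1le : 1 ≤ ‖x‖ := not_lt.1 hlt
        have hbpos : (0:ℝ) < (‖x‖)⁻¹ := lt_trans zero_lt_one hcon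
        have h6 : (‖x‖)⁻¹ * 1 ≤ (‖x‖)⁻¹ * ‖x‖ :=
          mul_le_mul_of_nonneg_left h1le (le_of_lt hbpos)
        rw [mul_one, inv_mul_cancel₀ habspos.ne'] at h6
        linarith
  set P := Rout + H with hPdef
  have hPmem : ∀ ρ ∈ P, ρ ≠ 0 ∧ 1 ≤ ‖ρ‖ := by
    intro ρ hρ
    rcases Multiset.mem_add.1 hρ with h | h
    · rw [hRoutDef] at h
      have h2 := Multiset.of_mem_filter h
      refine ⟨?_, le_of_lt h2⟩
      intro h0
      rw [h0] at h2
      simp only [norm_zero] at h2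
      norm_num at h2
    · have h2 := hHmem ρ h
      refine ⟨?_, le_of_eq h2.symm⟩
      intro h0
      rw [h0] at h2
      simp only [norm_zero] at h2
      norm_num at h2
  have hPR : ∀ ρ ∈ P, ρ ∈ R := by
    intro ρ hρ
    rcases Multiset.mem_add.1 hρ with h | h
    · exact Multiset.mem_of_le (Multiset.filter_le _ R) (by rw [← hRoutDef]; exact h)
    · exact Multiset.mem_of_le ((hHle.trans (Multiset.filter_le _ R)) : H ≤ R) h
  have hPσ : P.map σfun = Rin + H := by
    rw [hPdef, Multiset.map_add, hσout, hσH]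
  set M := Multiset.card P with hMdef
  have hMN : k + M = N := by
    have h0 : Multiset.card R0 = k := by
      rw [hR0Def, Multiset.filter_eq', Multiset.card_replicate, hcount]
    have h1 : Multiset.card Rin = Multiset.card Rout := by
      rw [← hσout, Multiset.card_map]
    have h2 : Multiset.card Ron = Multiset.card H + Multiset.card H := by
      rw [← hH, Multiset.card_add]
    have h3 := congrArg Multiset.card hpart
    simp only [Multiset.card_add] at h3
    have h4 : Multiset.card P = Multiset.card Rout + Multiset.card H := by
      rw [hPdef, Multiset.card_add]
    omega
  -- ### part 4
  set Pc := (P.map (fun ρ => -((starRingEnd ℂ) ρ))).prod with hPcdef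
  have hPcne : Pc ≠ 0 := by
    rw [hPcdef]
    apply Multiset.prod_ne_zero
    intro hmem
    obtain ⟨ρ, hρP, hρ0⟩ := Multiset.mem_map.1 hmem
    apply (hPmem ρ hρP).1
    have h1 : (starRingEnd ℂ) ρ = 0 := by rwa [neg_eq_zero] at hρ0
    simpa using h1
  have hconjfac : ∀ z : ℂ, z ≠ 0 →
      (starRingEnd ℂ) ((P.map (fun ρ => σfun z - ρ)).prod)
        = Pc * (z⁻¹) ^ M * ((Rin + H).map (fun w => z - w)).prod := by
    intro z hz
    rw [map_multiset_prod, Multiset.map_map]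
    have h2 : ∀ ρ ∈ P, ((starRingEnd ℂ) ∘ (fun ρ => σfun z - ρ)) ρ
        = (-((starRingEnd ℂ) ρ)) * ((z - σfun ρ) * z⁻¹) := by
      intro ρ hρ
      have hρ0 := (hPmem ρ hρ).1
      have hcρ : (starRingEnd ℂ) ρ ≠ 0 := by simpa using hρ0
      simp only [Function.comp, hσfun, map_sub, map_inv₀, Complex.conj_conj]
      field_simp
      ring
    rw [Multiset.map_congr rfl h2, Multiset.prod_map_mul, Multiset.prod_map_mul]
    have h3 : (P.map (fun ρ => z - σfun ρ)) = (P.map σfun).map (fun w => z - w) := by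
      rw [Multiset.map_map]
      rfl
    have h4 : (P.map (fun _ : ℂ => z⁻¹)).prod = (z⁻¹) ^ M := by
      rw [Multiset.map_const', Multiset.prod_replicate, hMdef]
    rw [h3, hPσ, h4, ← hPcdef]
    ring
  have hqevalz : ∀ z : ℂ, z ≠ 0 → q.eval z =
      lead * z ^ k * ((Rin + H).map (fun w => z - w)).prod
        * (P.map (fun ρ => z - ρ)).prod := by
    intro z hz
    conv_lhs => rw [hsplits]
    rw [eval_mul, eval_C, eval_multiset_prod, Multiset.map_map]
    have h1 : ((fun pp : ℂ[X] => eval z pp) ∘ fun ρ : ℂ => X - C ρ) = fun ρ : ℂ => z - ρ := by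
      funext ρ
      simp
    rw [h1]
    have h2 : R = R0 + ((Rin + H) + P) := by
      rw [hPdef]
      conv_lhs => rw [← hpart, ← hH]
      have : R0 + Rin + (H + H) + Rout = R0 + ((Rin + H) + (Rout + H)) := by
        abel
      exact this
    rw [h2, Multiset.map_add, Multiset.map_add, Multiset.prod_add, Multiset.prod_add]
    have h3 : (R0.map (fun w : ℂ => z - w)).prod = z ^ k := by
      rw [hR0Def, Multiset.filter_eq', Multiset.map_replicate, Multiset.prod_replicate,
        sub_zero, hcount]
    rw [h3]
    ring
  -- choose base point z0
  have hrootsfin : {x : ℂ | q.IsRoot x}.Finite := Polynomial.finite_setOf_isRoot hq0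
  obtain ⟨z0, hz0circ, hz0not⟩ := (aux_circle_infinite.diff (hpos.union hrootsfin)).nonempty
  have hz0circ' : ‖z0‖ = 1 := hz0circ
  have hz0ne : z0 ≠ 0 := by
    intro h0
    rw [h0] at hz0circ'
    simp at hz0circ'
  have hz0root : q.eval z0 ≠ 0 := fun h => hz0not (Set.mem_union_right _ h)
  obtain ⟨r0, hr0pos, hsr0⟩ : ∃ r : ℝ, 0 < r ∧ s z0 = r := by
    by_contra hc
    exact hz0not (Set.mem_union_left _ ⟨hz0circ', hc⟩)
  have hσz0 : σfun z0 = z0 := hσcirc z0 hz0circ'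
  set W := (P.map (fun ρ => z0 - ρ)).prod with hWdef
  have hWne : W ≠ 0 := by
    rw [hWdef]
    apply Multiset.prod_ne_zero
    intro hmem
    obtain ⟨ρ, hρP, hρ0⟩ := Multiset.mem_map.1 hmem
    apply hz0root
    have hzρ : z0 = ρ := sub_eq_zero.1 hρ0
    have hρR : ρ ∈ R := hPR ρ hρP
    rw [hRdef] at hρR
    have := (Polynomial.mem_roots hq0).1 hρR
    rw [hzρ]
    exact this
  have hW2 : (starRingEnd ℂ) W = Pc * (z0⁻¹) ^ M * ((Rin + H).map (fun w => z0 - w)).prod := by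
    have h5 := hconjfac z0 hz0ne
    rw [hσz0] at h5
    rw [hWdef]
    exact h5
  have hzzM : (z0⁻¹) ^ M * z0 ^ M = 1 := by
    rw [← mul_pow, inv_mul_cancel₀ hz0ne, one_pow]
  have hInH0 : (starRingEnd ℂ) W * z0 ^ M
      = Pc * ((Rin + H).map (fun w => z0 - w)).prod := by
    rw [hW2]
    linear_combination (Pc * ((Rin + H).map (fun w => z0 - w)).prod) * hzzM
  have hz0id := hqevalz z0 hz0ne
  rw [heval z0 hz0ne, hsr0] at hz0id
  have hzkM : z0 ^ k * z0 ^ M = z0 ^ N := by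
    rw [← pow_add, hMN]
  have hkey : Pc * (r0:ℂ) = lead * ((starRingEnd ℂ) W * W) := by
    have h5 : z0 ^ N * (Pc * (r0:ℂ)) = z0 ^ N * (lead * ((starRingEnd ℂ) W * W)) := by
      calc z0 ^ N * (Pc * (r0:ℂ)) = Pc * (z0 ^ N * (r0:ℂ)) := by ring
      _ = Pc * (lead * z0 ^ k * ((Rin + H).map (fun w => z0 - w)).prod * W) := by rw [hz0id]
      _ = lead * z0 ^ k * (Pc * ((Rin + H).map (fun w => z0 - w)).prod) * W := by ring
      _ = lead * z0 ^ k * ((starRingEnd ℂ) W * z0 ^ M) * W := by rw [← hInH0]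
      _ = (z0 ^ k * z0 ^ M) * (lead * ((starRingEnd ℂ) W * W)) := by ring
      _ = z0 ^ N * (lead * ((starRingEnd ℂ) W * W)) := by rw [hzkM]
    exact mul_left_cancel₀ (pow_ne_zero N hz0ne) h5
  have hWW : (starRingEnd ℂ) W * W = (Complex.normSq W : ℂ) := by
    rw [mul_comm, Complex.mul_conj]
  have hnormpos : 0 < Complex.normSq W := Complex.normSq_pos.2 hWne
  set lam : ℝ := r0 / Complex.normSq W with hlam
  have hlampos : 0 < lam := div_pos hr0pos hnormpos
  have hlead : lead = (lam:ℂ) * Pc := by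
    rw [hWW] at hkey
    rw [hlam]
    push_cast
    rw [div_mul_eq_mul_div, eq_div_iff (by exact_mod_cast hnormpos.ne')]
    linear_combination -hkey
  set b : ℂ := ((Real.sqrt lam : ℝ) : ℂ) with hb
  have hbne : b ≠ 0 := by
    rw [hb]
    exact_mod_cast Complex.ofReal_ne_zero.2 (Real.sqrt_ne_zero'.2 hlampos)
  have hb2 : b * (starRingEnd ℂ) b = (lam : ℂ) := by
    rw [hb, Complex.conj_ofReal, ← Complex.ofReal_mul, Real.mul_self_sqrt hlampos.le]
  set p : ℂ[X] := C b * (P.map (fun ρ => X - C ρ)).prod with hpdef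
  have hpeval : ∀ z : ℂ, p.eval z = b * (P.map (fun ρ => z - ρ)).prod := by
    intro z
    rw [hpdef, eval_mul, eval_C, eval_multiset_prod, Multiset.map_map]
    have h1 : ((fun pp : ℂ[X] => eval z pp) ∘ fun ρ : ℂ => X - C ρ) = fun ρ : ℂ => z - ρ := by
      funext ρ
      simp
    rw [h1]
  have hpdeg : p.natDegree ≤ N := by
    rw [hpdef]
    apply le_trans natDegree_mul_le
    rw [natDegree_C, natDegree_multiset_prod_X_sub_C_eq_card]
    omega
  have hfinal : ∀ z : ℂ, z ≠ 0 → s z = p.eval z * (starRingEnd ℂ) (p.eval (σfun z)) := by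
    intro z hz
    have h6 : (starRingEnd ℂ) (p.eval (σfun z))
        = (starRingEnd ℂ) b * (Pc * (z⁻¹) ^ M * ((Rin + H).map (fun w => z - w)).prod) := by
      rw [hpeval, map_mul, hconjfac z hz]
    have h7 : p.eval z * (starRingEnd ℂ) (p.eval (σfun z))
        = (lam:ℂ) * (Pc * (z⁻¹) ^ M * (P.map (fun ρ => z - ρ)).prod
            * ((Rin + H).map (fun w => z - w)).prod) := by
      rw [hpeval z, h6, ← hb2]
      ring
    have h8 := hqevalz z hz
    rw [heval z hz] at h8
    have hzM1 : z ^ M * (z⁻¹) ^ M = 1 := by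
      rw [← mul_pow, mul_inv_cancel₀ hz, one_pow]
    have h9 : z ^ N * (p.eval z * (starRingEnd ℂ) (p.eval (σfun z))) = z ^ N * s z := by
      rw [h7, h8, hlead, show N = k + M from hMN.symm, pow_add]
      linear_combination ((lam:ℂ) * Pc * (P.map (fun ρ => z - ρ)).prod
        * ((Rin + H).map (fun w => z - w)).prod * z ^ k) * hzM1
    exact (mul_left_cancel₀ (pow_ne_zero N hz) h9).symm
  set a : ℕ → ℂ := fun n => p.coeff n with hadef
  have hsum1 : ∀ z : ℂ, (∑ n ∈ Finset.range (N+1), a n * z ^ n) = p.eval z := by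
    intro z
    rw [eval_eq_sum_range' (lt_of_le_of_lt hpdeg (Nat.lt_succ_self N))]
  have hsum2 : ∀ z : ℂ, z ≠ 0 →
      (∑ n ∈ Finset.range (N+1), (starRingEnd ℂ) (a n) * z ^ (-(n:ℤ)))
        = (starRingEnd ℂ) (p.eval (σfun z)) := by
    intro z hz
    have hdegm : (p.map (starRingEnd ℂ)).natDegree < N + 1 :=
      lt_of_le_of_lt (natDegree_map_le.trans hpdeg) (Nat.lt_succ_self N)
    have h1 : (starRingEnd ℂ) (p.eval (σfun z)) = (p.map (starRingEnd ℂ)).eval z⁻¹ := by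
      rw [eval_map, show (z⁻¹) = (starRingEnd ℂ) (σfun z) from by
        rw [hσfun]; simp [map_inv₀], Polynomial.eval₂_at_apply]
    rw [h1, eval_eq_sum_range' hdegm]
    apply Finset.sum_congr rfl
    intro n hn
    rw [coeff_map]
    congr 1
    rw [zpow_neg, zpow_natCast, inv_pow]
  refine ⟨a, ?_, ?_⟩
  · intro z hzlt
    rw [hsum1, hpeval]
    apply mul_ne_zero hbne
    apply Multiset.prod_ne_zero
    intro hmem
    obtain ⟨ρ, hρP, hρ0⟩ := Multiset.mem_map.1 hmem
    have h1 := (hPmem ρ hρP).2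
    rw [← sub_eq_zero.1 hρ0] at h1
    linarith
  · intro z hz
    rw [hsum1, hsum2 z hz]
    exact hfinal z hz
end

section
/- Let U be an m×m rational matrix function such that every entry of U has no poles in the closed unit disk {|z| ≤ 1}, det U(z) ≠ 0 for every z with |z| < 1, and U(z) U(z)* = I_m for all but finitely many z on the unit circle. Then U is a constant matrix function: there is a unitary matrix U₀ ∈ ℂ^{m×m} with U(z) = U₀ for all z in the domain of U. -/
open scoped BigOperators Matrix

/-- Pointwise evaluation of an `m × m` matrix of rational functions at `z ∈ ℂ`. -/
noncomputable def matEval {m : ℕ} (A : Matrix (Fin m) (Fin m) (RatFunc ℂ)) (z : ℂ) :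
    Matrix (Fin m) (Fin m) ℂ :=
  Matrix.of fun i j => (A i j).eval (RingHom.id ℂ) z

namespace AuxPara

open Metric Set Filter

variable {m : ℕ}

/-- Bridge to Euclidean space. -/
noncomputable def ev {m : ℕ} (v : Fin m → ℂ) : EuclideanSpace ℂ (Fin m) :=
  (WithLp.equiv 2 (Fin m → ℂ)).symm v

lemma inner_ev (x y : Fin m → ℂ) :
    (inner ℂ (ev x) (ev y) : ℂ) = dotProduct (star x) y := by
  simp [ev, PiLp.inner_apply, dotProduct, RCLike.inner_apply]
  exact Finset.sum_congr rfl fun _ _ => mul_comm _ _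

lemma ev_inj {x y : Fin m → ℂ} (h : ev x = ev y) : x = y := by
  simpa [ev] using congrArg (WithLp.equiv 2 (Fin m → ℂ)) h

lemma norm_ev_sq (x : Fin m → ℂ) :
    ((‖ev x‖ : ℂ)) ^ 2 = dotProduct (star x) x := by
  rw [← inner_ev x x, inner_self_eq_norm_sq_to_K]
  norm_cast

lemma dot_unitary {N : Matrix (Fin m) (Fin m) ℂ} (h : N * Nᴴ = 1) (x : Fin m → ℂ) :
    dotProduct (star (N *ᵥ x)) (N *ᵥ x) = dotProduct (star x) x := by
  have h' : Nᴴ * N = 1 := mul_eq_one_comm.mp h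
  rw [Matrix.star_mulVec, Matrix.dotProduct_mulVec, Matrix.vecMul_vecMul, h',
    Matrix.vecMul_one]

lemma norm_mulVec_of_unitary {N : Matrix (Fin m) (Fin m) ℂ} (h : N * Nᴴ = 1)
    (x : Fin m → ℂ) : ‖ev (N *ᵥ x)‖ = ‖ev x‖ := by
  have key := dot_unitary h x
  rw [← norm_ev_sq, ← norm_ev_sq] at key
  have h2 : (‖ev (N *ᵥ x)‖ : ℝ) ^ 2 = (‖ev x‖ : ℝ) ^ 2 := by exact_mod_cast key
  calc ‖ev (N *ᵥ x)‖ = Real.sqrt (‖ev (N *ᵥ x)‖ ^ 2) := (Real.sqrt_sq (norm_nonneg _)).symm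
    _ = Real.sqrt (‖ev x‖ ^ 2) := by rw [h2]
    _ = ‖ev x‖ := Real.sqrt_sq (norm_nonneg _)

/-- Scalar maximum-modulus bound. -/
lemma scalar_bound (M : ℂ → Matrix (Fin m) (Fin m) ℂ)
    (hdiff : ∀ i j, DifferentiableOn ℂ (fun z => M z i j) (ball (0:ℂ) 1))
    (hcont : ∀ i j, ContinuousOn (fun z => M z i j) (closedBall (0:ℂ) 1))
    (hcirc : ∀ w : ℂ, ‖w‖ = 1 → M w * (M w)ᴴ = 1)
    (x y : Fin m → ℂ) {z : ℂ} (hz : ‖z‖ ≤ 1) :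
    ‖dotProduct (star y) (M z *ᵥ x)‖ ≤ ‖ev y‖ * ‖ev x‖ := by
  set f : ℂ → ℂ := fun z => dotProduct (star y) (M z *ᵥ x) with hf
  have hfeq : f = fun z => ∑ i, star y i * ∑ j, M z i j * x j := by
    funext z
    simp [hf, dotProduct, Matrix.mulVec]
  have hdc : DiffContOnCl ℂ f (ball (0:ℂ) 1) := by
    constructor
    · rw [hfeq]
      apply DifferentiableOn.fun_sum
      intro i _
      exact DifferentiableOn.const_mul
        (DifferentiableOn.fun_sum fun j _ => (hdiff i j).mul (differentiableOn_const _)) _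
    · rw [closure_ball (0:ℂ) one_ne_zero, hfeq]
      apply continuousOn_finset_sum
      intro i _
      exact ContinuousOn.mul continuousOn_const
        (continuousOn_finset_sum _ fun j _ => (hcont i j).mul continuousOn_const)
  have hbound : ∀ w ∈ frontier (ball (0:ℂ) 1), ‖f w‖ ≤ ‖ev y‖ * ‖ev x‖ := by
    intro w hw
    rw [frontier_ball (0:ℂ) one_ne_zero, mem_sphere_zero_iff_norm] at hw
    have hw' : ‖w‖ = 1 := hw
    have h1 : f w = inner ℂ (ev y) (ev (M w *ᵥ x)) := (inner_ev _ _).symm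
    rw [h1]
    calc ‖(inner ℂ (ev y) (ev (M w *ᵥ x)) : ℂ)‖ ≤ ‖ev y‖ * ‖ev (M w *ᵥ x)‖ :=
          norm_inner_le_norm _ _
      _ = ‖ev y‖ * ‖ev x‖ := by rw [norm_mulVec_of_unitary (hcirc w hw')]
  have hzmem : z ∈ closure (ball (0:ℂ) 1) := by
    rw [closure_ball (0:ℂ) one_ne_zero, mem_closedBall_zero_iff]
    exact hz
  exact Complex.norm_le_of_forall_mem_frontier_norm_le isBounded_ball hdc hbound hzmem

/-- Operator-norm bound from the scalar bound. -/
lemma op_bound (M : ℂ → Matrix (Fin m) (Fin m) ℂ)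
    (hdiff : ∀ i j, DifferentiableOn ℂ (fun z => M z i j) (ball (0:ℂ) 1))
    (hcont : ∀ i j, ContinuousOn (fun z => M z i j) (closedBall (0:ℂ) 1))
    (hcirc : ∀ w : ℂ, ‖w‖ = 1 → M w * (M w)ᴴ = 1)
    (x : Fin m → ℂ) {z : ℂ} (hz : ‖z‖ ≤ 1) :
    ‖ev (M z *ᵥ x)‖ ≤ ‖ev x‖ := by
  have h := scalar_bound M hdiff hcont hcirc x (M z *ᵥ x) hz
  have h2 : ‖dotProduct (star (M z *ᵥ x)) (M z *ᵥ x)‖ = ‖ev (M z *ᵥ x)‖ ^ 2 := by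
    rw [← norm_ev_sq]
    rw [norm_pow, Complex.norm_real, Real.norm_of_nonneg (norm_nonneg _)]
  rw [h2] at h
  nlinarith [norm_nonneg (ev (M z *ᵥ x)), norm_nonneg (ev x)]

/-- Adjoint of a contraction is a contraction. -/
lemma adjoint_bound {A : Matrix (Fin m) (Fin m) ℂ}
    (h : ∀ v : Fin m → ℂ, ‖ev (A *ᵥ v)‖ ≤ ‖ev v‖) (x : Fin m → ℂ) :
    ‖ev (Aᴴ *ᵥ x)‖ ≤ ‖ev x‖ := by
  have key : dotProduct (star (Aᴴ *ᵥ x)) (Aᴴ *ᵥ x)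
      = dotProduct (star (A *ᵥ (Aᴴ *ᵥ x))) x := by
    conv_rhs => rw [Matrix.star_mulVec]
    rw [Matrix.dotProduct_mulVec]
  have h1 : ((‖ev (Aᴴ *ᵥ x)‖ : ℂ)) ^ 2 = inner ℂ (ev (A *ᵥ (Aᴴ *ᵥ x))) (ev x) := by
    rw [norm_ev_sq, key, inner_ev]
  have h1' : ‖ev (Aᴴ *ᵥ x)‖ ^ 2
      = ‖(inner ℂ (ev (A *ᵥ (Aᴴ *ᵥ x))) (ev x) : ℂ)‖ := by
    rw [← h1, norm_pow, Complex.norm_real, Real.norm_of_nonneg (norm_nonneg _)]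
  have h2 : ‖(inner ℂ (ev (A *ᵥ (Aᴴ *ᵥ x))) (ev x) : ℂ)‖
      ≤ ‖ev (Aᴴ *ᵥ x)‖ * ‖ev x‖ :=
    (norm_inner_le_norm _ _).trans
      (mul_le_mul_of_nonneg_right (h (Aᴴ *ᵥ x)) (norm_nonneg _))
  have h3 : ‖ev (Aᴴ *ᵥ x)‖ ^ 2 ≤ ‖ev (Aᴴ *ᵥ x)‖ * ‖ev x‖ := h1' ▸ h2
  nlinarith [norm_nonneg (ev (Aᴴ *ᵥ x)), norm_nonneg (ev x)]

/-- Determinant of a matrix-valued function is differentiable. -/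
lemma det_diffOn {M : ℂ → Matrix (Fin m) (Fin m) ℂ} {s : Set ℂ}
    (h : ∀ i j, DifferentiableOn ℂ (fun z => M z i j) s) :
    DifferentiableOn ℂ (fun z => (M z).det) s := by
  simp only [Matrix.det_apply']
  apply DifferentiableOn.fun_sum
  intro σ _
  exact DifferentiableOn.const_mul
    (DifferentiableOn.fun_finset_prod fun i _ => h (σ i) i) _

lemma det_contOn {M : ℂ → Matrix (Fin m) (Fin m) ℂ} {s : Set ℂ}
    (h : ∀ i j, ContinuousOn (fun z => M z i j) s) :
    ContinuousOn (fun z => (M z).det) s := by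
  simp only [Matrix.det_apply']
  apply continuousOn_finset_sum
  intro σ _
  exact ContinuousOn.mul continuousOn_const
    (continuousOn_finset_prod _ fun i _ => h (σ i) i)

lemma adj_diffOn {M : ℂ → Matrix (Fin m) (Fin m) ℂ} {s : Set ℂ}
    (h : ∀ i j, DifferentiableOn ℂ (fun z => M z i j) s) (i j : Fin m) :
    DifferentiableOn ℂ (fun z => (M z).adjugate i j) s := by
  simp only [Matrix.adjugate_apply]
  apply det_diffOn
  intro k l
  rcases eq_or_ne k j with hk | hk
  · subst hk
    simp only [Matrix.updateRow_self]
    exact differentiableOn_const _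
  · simp only [Matrix.updateRow_ne hk]
    exact h k l

lemma adj_contOn {M : ℂ → Matrix (Fin m) (Fin m) ℂ} {s : Set ℂ}
    (h : ∀ i j, ContinuousOn (fun z => M z i j) s) (i j : Fin m) :
    ContinuousOn (fun z => (M z).adjugate i j) s := by
  simp only [Matrix.adjugate_apply]
  apply det_contOn
  intro k l
  rcases eq_or_ne k j with hk | hk
  · subst hk
    simp only [Matrix.updateRow_self]
    exact continuousOn_const
  · simp only [Matrix.updateRow_ne hk]
    exact h k l

end AuxPara

open AuxPara Metric Set Filter

/-- A rational matrix function `U` with no poles in the closed unit disk, with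
`det U(z) ≠ 0` on the open unit disk and `U(z) U(z)* = I` for all but finitely
many `z` on the unit circle, is a constant unitary matrix function. -/
theorem analytic_paraunitary_is_constant
    (m : ℕ) (hm : 0 < m)
    (U : Matrix (Fin m) (Fin m) (RatFunc ℂ))
    (hnopole : ∀ i j : Fin m, ∀ z : ℂ, ‖z‖ ≤ 1 →
      Polynomial.eval z (U i j).denom ≠ 0)
    (hdet : ∀ z : ℂ, ‖z‖ < 1 → (matEval U z).det ≠ 0)
    (huni : {z : ℂ | ‖z‖ = 1 ∧
      matEval U z * (matEval U z)ᴴ ≠ 1}.Finite) :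
    ∃ U₀ : Matrix (Fin m) (Fin m) ℂ, U₀ * U₀ᴴ = 1 ∧
      ∀ z : ℂ, (∀ i j : Fin m, Polynomial.eval z (U i j).denom ≠ 0) →
        matEval U z = U₀ := by
  -- entrywise formula for evaluation
  have hEentry : ∀ (i j : Fin m) (z : ℂ),
      matEval U z i j = ((U i j).num.eval z) / ((U i j).denom.eval z) := by
    intro i j z
    rfl
  -- continuity of entries on the closed disk
  have hEcont : ∀ i j, ContinuousOn (fun z => matEval U z i j) (closedBall (0:ℂ) 1) := by
    intro i j
    have : (fun z => matEval U z i j)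
        = fun z => ((U i j).num.eval z) / ((U i j).denom.eval z) := by
      funext z; exact hEentry i j z
    rw [this]
    exact ContinuousOn.div ((U i j).num.continuous.continuousOn)
      ((U i j).denom.continuous.continuousOn)
      (fun z hz => hnopole i j z (mem_closedBall_zero_iff.mp hz))
  -- differentiability of entries on the open ball
  have hEdiff : ∀ i j, DifferentiableOn ℂ (fun z => matEval U z i j) (ball (0:ℂ) 1) := by
    intro i j
    have : (fun z => matEval U z i j)
        = fun z => ((U i j).num.eval z) / ((U i j).denom.eval z) := by
      funext z; exact hEentry i j z
    rw [this]
    apply DifferentiableOn.div ((U i j).num.differentiable.differentiableOn)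
      ((U i j).denom.differentiable.differentiableOn)
    intro z hz
    exact hnopole i j z (le_of_lt (mem_ball_zero_iff.mp hz))
  -- unitarity everywhere on the circle
  have hL1 : ∀ w : ℂ, ‖w‖ = 1 → matEval U w * (matEval U w)ᴴ = 1 := by
    intro w hw
    set G : ℂ → Matrix (Fin m) (Fin m) ℂ := fun z => matEval U z * (matEval U z)ᴴ with hG
    set zs : ℕ → ℂ := fun n => w * Complex.exp ((((n:ℝ)+1)⁻¹ : ℝ) * Complex.I) with hzs
    have hw0 : w ≠ 0 := by
      intro h; rw [h] at hw; simp at hw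
    have habs : ∀ n, ‖(zs n)‖ = 1 := by
      intro n
      simp [hzs, map_mul, hw, Complex.norm_exp]
    have hne : ∀ n, zs n ≠ w := by
      intro n h
      have h1 : Complex.exp ((((n:ℝ)+1)⁻¹ : ℝ) * Complex.I) = 1 := by
        apply mul_left_cancel₀ hw0
        rw [mul_one]
        exact h
      rw [Complex.exp_eq_one_iff] at h1
      obtain ⟨k, hk⟩ := h1
      have hk' : ((((n:ℝ)+1)⁻¹ : ℝ) : ℂ) = (k : ℂ) * (2 * Real.pi) := by
        apply mul_right_cancel₀ Complex.I_ne_zero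
        rw [hk]; ring
      have him : (((n:ℝ)+1)⁻¹ : ℝ) = (k : ℝ) * (2 * Real.pi) := by
        exact_mod_cast hk'
      have hpos : (0:ℝ) < ((n:ℝ)+1)⁻¹ := by positivity
      have hle : (((n:ℝ)+1)⁻¹ : ℝ) ≤ 1 := by
        rw [inv_le_one_iff₀]
        right; linarith [Nat.cast_nonneg (α := ℝ) n]
      have hpi : (2:ℝ) ≤ 2 * Real.pi := by nlinarith [Real.pi_gt_three]
      rcases lt_trichotomy (k:ℝ) 0 with hk0 | hk0 | hk0
      · nlinarith
      · rw [hk0] at him; simp at him; linarith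
      · have : (1:ℝ) ≤ (k:ℝ) := by exact_mod_cast (by exact_mod_cast hk0 : (0:ℤ) < k)
        nlinarith
    have htend : Tendsto zs atTop (nhds w) := by
      have h1 : Tendsto (fun n : ℕ => (((n:ℝ)+1)⁻¹ : ℝ)) atTop (nhds 0) :=
        tendsto_one_div_add_atTop_nhds_zero_nat.congr (by intro n; rw [one_div])
      have h2 : Tendsto (fun n : ℕ => ((((n:ℝ)+1)⁻¹ : ℝ) : ℂ) * Complex.I) atTop
          (nhds 0) := by
        have hc : Tendsto (fun n : ℕ => ((((n:ℝ)+1)⁻¹ : ℝ) : ℂ)) atTop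
            (nhds (((0:ℝ):ℂ))) := (Complex.continuous_ofReal.tendsto 0).comp h1
        have := hc.mul_const Complex.I
        rw [Complex.ofReal_zero, zero_mul] at this
        exact this
      have h3 : Tendsto (fun n : ℕ =>
          Complex.exp (((((n:ℝ)+1)⁻¹ : ℝ) : ℂ) * Complex.I)) atTop (nhds 1) := by
        have hc := (Complex.continuous_exp.tendsto 0).comp h2
        rw [Complex.exp_zero] at hc
        exact hc
      have h4 := h3.const_mul w
      rw [mul_one] at h4
      rw [hzs]
      exact h4
    -- eventually zs n avoids the bad finite set
    have hbad : ∀ᶠ n in atTop, G (zs n) = 1 := by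
      have hav : ∀ᶠ n in atTop, ∀ p ∈ {z : ℂ | ‖z‖ = 1 ∧
          matEval U z * (matEval U z)ᴴ ≠ 1}, zs n ≠ p := by
        rw [huni.eventually_all]
        intro p hp
        rcases eq_or_ne p w with rfl | hpw
        · exact Eventually.of_forall hne
        · have hd : 0 < dist w p := dist_pos.mpr (Ne.symm hpw)
          have := htend (Metric.ball_mem_nhds w hd)
          filter_upwards [this] with n hn hnp
          rw [Set.mem_preimage, hnp, Metric.mem_ball, dist_comm] at hn
          exact lt_irrefl _ hn
      filter_upwards [hav] with n hn
      by_contra hcon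
      exact hn (zs n) ⟨habs n, hcon⟩ rfl
    -- continuity of G entries along the sequence
    have hGij : ∀ i j : Fin m, G w i j = (1 : Matrix (Fin m) (Fin m) ℂ) i j := by
      intro i j
      have hcw : ContinuousWithinAt (fun z => G z i j) (closedBall (0:ℂ) 1) w := by
        have : ContinuousOn (fun z => G z i j) (closedBall (0:ℂ) 1) := by
          have : (fun z => G z i j)
              = fun z => ∑ k, matEval U z i k * (starRingEnd ℂ) (matEval U z j k) := by
            funext z
            simp [hG, Matrix.mul_apply, Matrix.conjTranspose_apply, dotProduct]
          rw [this]
          apply continuousOn_finset_sum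
          intro k _
          exact (hEcont i k).mul ((Complex.continuous_conj.comp_continuousOn (hEcont j k)))
        exact this.continuousWithinAt (by
          rw [mem_closedBall_zero_iff]
          exact le_of_eq hw)
      have hmemseq : ∀ n, zs n ∈ closedBall (0:ℂ) 1 := by
        intro n
        rw [mem_closedBall_zero_iff]
        exact le_of_eq (habs n)
      have htend2 : Tendsto (fun n => G (zs n) i j) atTop (nhds (G w i j)) := by
        apply hcw.tendsto.comp
        rw [tendsto_nhdsWithin_iff]
        exact ⟨htend, Eventually.of_forall hmemseq⟩
      have htend3 : Tendsto (fun n => G (zs n) i j) atTop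
          (nhds ((1 : Matrix (Fin m) (Fin m) ℂ) i j)) := by
        apply Tendsto.congr' _ tendsto_const_nhds
        filter_upwards [hbad] with n hn
        rw [hn]
      exact tendsto_nhds_unique htend2 htend3
    ext i j
    exact hGij i j
  -- det nonzero on the closed disk
  have hdet' : ∀ z : ℂ, ‖z‖ ≤ 1 → (matEval U z).det ≠ 0 := by
    intro z hz
    rcases lt_or_eq_of_le hz with h | h
    · exact hdet z h
    · have h1 := hL1 z h
      have h2 : (matEval U z).det * (matEval U z)ᴴ.det = 1 := by
        rw [← Matrix.det_mul, h1, Matrix.det_one]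
      exact left_ne_zero_of_mul_eq_one h2
  -- the analytic inverse
  set A : ℂ → Matrix (Fin m) (Fin m) ℂ :=
    fun z => ((matEval U z).det)⁻¹ • (matEval U z).adjugate with hA
  have hAE : ∀ z : ℂ, ‖z‖ ≤ 1 → A z * matEval U z = 1 := by
    intro z hz
    rw [hA]
    rw [Matrix.smul_mul, Matrix.adjugate_mul, smul_smul,
      inv_mul_cancel₀ (hdet' z hz), one_smul]
  have hEA : ∀ z : ℂ, ‖z‖ ≤ 1 → matEval U z * A z = 1 := by
    intro z hz
    rw [hA]
    rw [Matrix.mul_smul, Matrix.mul_adjugate, smul_smul,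
      inv_mul_cancel₀ (hdet' z hz), one_smul]
  have hAcirc : ∀ w : ℂ, ‖w‖ = 1 → A w * (A w)ᴴ = 1 := by
    intro w hw
    have h1 : A w = (matEval U w)ᴴ := by
      calc A w = A w * (matEval U w * (matEval U w)ᴴ) := by rw [hL1 w hw, mul_one]
        _ = (A w * matEval U w) * (matEval U w)ᴴ := by rw [mul_assoc]
        _ = (matEval U w)ᴴ := by rw [hAE w (le_of_eq hw), one_mul]
    rw [h1, Matrix.conjTranspose_conjTranspose]
    exact mul_eq_one_comm.mp (hL1 w hw)
  have hAdiff : ∀ i j, DifferentiableOn ℂ (fun z => A z i j) (ball (0:ℂ) 1) := by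
    intro i j
    have : (fun z => A z i j)
        = fun z => ((matEval U z).det)⁻¹ * (matEval U z).adjugate i j := by
      funext z; simp [hA]
    rw [this]
    apply DifferentiableOn.mul
    · apply DifferentiableOn.inv (det_diffOn hEdiff)
      intro z hz
      exact hdet' z (le_of_lt (mem_ball_zero_iff.mp hz))
    · exact adj_diffOn hEdiff i j
  have hAcont : ∀ i j, ContinuousOn (fun z => A z i j) (closedBall (0:ℂ) 1) := by
    intro i j
    have : (fun z => A z i j)
        = fun z => ((matEval U z).det)⁻¹ * (matEval U z).adjugate i j := by
      funext z; simp [hA]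
    rw [this]
    apply ContinuousOn.mul
    · apply ContinuousOn.inv₀ (det_contOn hEcont)
      intro z hz
      exact hdet' z (mem_closedBall_zero_iff.mp hz)
    · exact adj_contOn hEcont i j
  -- operator bounds
  have hEop : ∀ (x : Fin m → ℂ) {z : ℂ}, ‖z‖ ≤ 1 →
      ‖ev (matEval U z *ᵥ x)‖ ≤ ‖ev x‖ :=
    fun x _ hz => op_bound _ hEdiff hEcont hL1 x hz
  have hAop : ∀ (x : Fin m → ℂ) {z : ℂ}, ‖z‖ ≤ 1 →
      ‖ev (A z *ᵥ x)‖ ≤ ‖ev x‖ :=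
    fun x _ hz => op_bound _ hAdiff hAcont hAcirc x hz
  have hBop : ∀ x : Fin m → ℂ, ‖ev ((A 0)ᴴ *ᵥ x)‖ ≤ ‖ev x‖ :=
    adjoint_bound (fun v => hAop v (by simp))
  -- constancy of columns on the open ball
  have hconst : ∀ (i j : Fin m), ∀ z ∈ ball (0:ℂ) 1,
      matEval U z i j = matEval U 0 i j := by
    intro i j z hzball
    set x : Fin m → ℂ := Pi.single j 1 with hx
    set y : Fin m → ℂ := (A 0)ᴴ *ᵥ x with hy
    have hxx : dotProduct (star x) x = 1 := by
      simp [hx, dotProduct_single, Pi.single_apply]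
    have hnx : ‖ev x‖ = 1 := by
      have h1 : ((‖ev x‖ : ℂ)) ^ 2 = 1 := by rw [norm_ev_sq, hxx]
      have h2 : (‖ev x‖ : ℝ) ^ 2 = 1 := by exact_mod_cast h1
      nlinarith [norm_nonneg (ev x)]
    have hny : ‖ev y‖ ≤ 1 := by
      rw [hy]
      calc ‖ev ((A 0)ᴴ *ᵥ x)‖ ≤ ‖ev x‖ := hBop x
        _ = 1 := hnx
    set F : ℂ → ℂ := fun z => dotProduct (star y) (matEval U z *ᵥ x) with hF
    -- key dot product identity
    have hFalt : ∀ w : Fin m → ℂ,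
        dotProduct (star y) w = dotProduct (star x) (A 0 *ᵥ w) := by
      intro w
      rw [hy, Matrix.star_mulVec, Matrix.conjTranspose_conjTranspose,
        Matrix.dotProduct_mulVec]
    have hF0 : F 0 = 1 := by
      rw [hF]
      show dotProduct (star y) (matEval U 0 *ᵥ x) = 1
      rw [hFalt, Matrix.mulVec_mulVec, hAE 0 (by simp), Matrix.one_mulVec, hxx]
    have hFle : ∀ w ∈ ball (0:ℂ) 1, ‖F w‖ ≤ 1 := by
      intro w hwb
      have hwle : ‖w‖ ≤ 1 := le_of_lt (mem_ball_zero_iff.mp hwb)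
      have h1 : F w = inner ℂ (ev y) (ev (matEval U w *ᵥ x)) := (inner_ev _ _).symm
      rw [h1]
      calc ‖(inner ℂ (ev y) (ev (matEval U w *ᵥ x)) : ℂ)‖
          ≤ ‖ev y‖ * ‖ev (matEval U w *ᵥ x)‖ := norm_inner_le_norm _ _
        _ ≤ 1 * ‖ev x‖ := by
            apply mul_le_mul hny (hEop x hwle) (norm_nonneg _) zero_le_one
        _ = 1 := by rw [one_mul, hnx]
    have hFdiff : DifferentiableOn ℂ F (ball (0:ℂ) 1) := by
      have : F = fun z => ∑ i, star y i * ∑ k, matEval U z i k * x k := by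
        funext z
        simp [hF, dotProduct, Matrix.mulVec]
      rw [this]
      apply DifferentiableOn.fun_sum
      intro i _
      exact DifferentiableOn.const_mul
        (DifferentiableOn.fun_sum fun k _ => (hEdiff i k).mul (differentiableOn_const _)) _
    have hFeq : ∀ w ∈ ball (0:ℂ) 1, F w = 1 := by
      have := Complex.eqOn_of_isPreconnected_of_isMaxOn_norm
        (convex_ball (0:ℂ) 1).isPreconnected isOpen_ball hFdiff
        (mem_ball_self one_pos)
        (by
          intro w hwb
          simp only [Function.comp_apply, Set.mem_setOf_eq]
          rw [hF0]
          simpa using hFle w hwb)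
      intro w hwb
      have := this hwb
      simp only [Function.const_apply] at this
      rw [this, hF0]
    -- from F ≡ 1 deduce the vector equality
    have hvec : ∀ w ∈ ball (0:ℂ) 1, matEval U w *ᵥ x = y := by
      intro w hwb
      have hwle : ‖w‖ ≤ 1 := le_of_lt (mem_ball_zero_iff.mp hwb)
      set u := ev (matEval U w *ᵥ x) with hu
      set v := ev y with hv
      have hinner : (inner ℂ v u : ℂ) = 1 := by
        rw [hv, hu, inner_ev]
        exact hFeq w hwb
      have hnu : ‖u‖ ≤ 1 := by
        rw [hu]
        calc ‖ev (matEval U w *ᵥ x)‖ ≤ ‖ev x‖ := hEop x hwle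
          _ = 1 := hnx
      have hvu : v = u := by
        have hsub : ‖v - u‖ ^ 2 = ‖v‖ ^ 2 - 2 * RCLike.re (inner ℂ v u : ℂ) + ‖u‖ ^ 2 :=
          norm_sub_sq v u
        rw [hinner] at hsub
        simp only [RCLike.one_re] at hsub
        have h0 : ‖v - u‖ ^ 2 ≤ 0 := by
          rw [hsub]
          nlinarith [norm_nonneg v, norm_nonneg u]
        have : ‖v - u‖ = 0 := by nlinarith [norm_nonneg (v - u), sq_nonneg ‖v - u‖]
        exact sub_eq_zero.mp (norm_eq_zero.mp this)
      have : y = matEval U w *ᵥ x := ev_inj hvu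
      exact this.symm
    have h1 := hvec z hzball
    have h0 := hvec 0 (mem_ball_self one_pos)
    have hcol : ∀ w : ℂ, (matEval U w *ᵥ x) i = matEval U w i j := by
      intro w
      rw [hx, Matrix.mulVec_single]
      exact mul_one _
    calc matEval U z i j = (matEval U z *ᵥ x) i := (hcol z).symm
      _ = y i := by rw [h1]
      _ = (matEval U 0 *ᵥ x) i := by rw [h0]
      _ = matEval U 0 i j := hcol 0
  -- the ball is infinite
  have hballinf : (ball (0:ℂ) 1).Infinite := by
    apply Set.infinite_of_injective_forall_mem (f := fun n : ℕ => (((n:ℂ)) + 2)⁻¹)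
    · intro a b hab
      have h1 : ((a:ℂ) + 2) = ((b:ℂ) + 2) := inv_inj.mp hab
      have : (a:ℂ) = (b:ℂ) := by linear_combination h1
      exact_mod_cast this
    · intro n
      rw [mem_ball_zero_iff, norm_inv]
      have h1 : ‖((n:ℂ) + 2)‖ = (n:ℝ) + 2 := by
        rw [show ((n:ℂ) + 2) = ((((n:ℝ) + 2) : ℝ) : ℂ) by push_cast; ring,
          Complex.norm_real, Real.norm_of_nonneg (by positivity)]
      rw [h1]
      rw [inv_lt_one_iff₀]
      right
      linarith [Nat.cast_nonneg (α := ℝ) n]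
  set U₀ : Matrix (Fin m) (Fin m) ℂ := matEval U 0 with hU0
  -- the rational functions are constant
  have hnum : ∀ i j : Fin m, (U i j).num = Polynomial.C (U₀ i j) * (U i j).denom := by
    intro i j
    have hroots : ∀ z ∈ ball (0:ℂ) 1,
        ((U i j).num - Polynomial.C (U₀ i j) * (U i j).denom).IsRoot z := by
      intro z hz
      have hzle : ‖z‖ ≤ 1 := le_of_lt (mem_ball_zero_iff.mp hz)
      have hden := hnopole i j z hzle
      have h1 : matEval U z i j = U₀ i j := hconst i j z hz
      rw [hEentry] at h1
      have h2 : (U i j).num.eval z = (U₀ i j) * (U i j).denom.eval z :=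
        (div_eq_iff hden).mp h1
      simp only [Polynomial.IsRoot, Polynomial.eval_sub, Polynomial.eval_mul,
        Polynomial.eval_C, h2, sub_self]
    have hinf : {z : ℂ |
        ((U i j).num - Polynomial.C (U₀ i j) * (U i j).denom).IsRoot z}.Infinite :=
      hballinf.mono hroots
    have h0 := Polynomial.eq_zero_of_infinite_isRoot _ hinf
    exact sub_eq_zero.mp h0
  have hval : ∀ z : ℂ, (∀ i j : Fin m, Polynomial.eval z (U i j).denom ≠ 0) →
      matEval U z = U₀ := by
    intro z hz
    ext i j
    rw [hEentry i j z, hnum i j, Polynomial.eval_mul, Polynomial.eval_C,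
      mul_div_assoc, div_self (hz i j), mul_one]
  refine ⟨U₀, ?_, hval⟩
  have h1 : ‖(1:ℂ)‖ = 1 := by simp
  have h2 := hL1 1 h1
  rwa [hval 1 (fun i j => hnopole i j 1 (le_of_eq h1))] at h2
end

section
/- Let F be an m×m rational matrix function with no poles in the open unit disk {|z| < 1}, and let a ∈ ℂ with |a| < 1 be such that det F(a) = 0. Then there exists a constant unitary matrix U ∈ ℂ^{m×m} such that every entry of the first column of F(z)·U vanishes at z = a; consequently F₁(z) = F(z) · U · diag[(1 − conj(a)z)/(z − a), 1, …, 1] has no poles in the open unit disk, and F₁(z) F₁(z)* = F(z) F(z)* for all but finitely many z on the unit circle. -/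
set_option maxHeartbeats 1000000


open scoped BigOperators Matrix

private lemma eval_ne_zero_of_dvd {p q : Polynomial ℂ} (h : p ∣ q) {z : ℂ}
    (hq : Polynomial.eval z q ≠ 0) : Polynomial.eval z p ≠ 0 := by
  obtain ⟨c, rfl⟩ := h
  simp only [Polynomial.eval_mul, mul_ne_zero_iff] at hq
  exact hq.1

private lemma sum_denom_eval {ι : Type*} (s : Finset ι) (f : ι → RatFunc ℂ) (z : ℂ)
    (h : ∀ k ∈ s, Polynomial.eval z (f k).denom ≠ 0) :
    Polynomial.eval z (∑ k ∈ s, f k).denom ≠ 0 ∧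
      (∑ k ∈ s, f k).eval (RingHom.id ℂ) z = ∑ k ∈ s, (f k).eval (RingHom.id ℂ) z := by
  classical
  induction s using Finset.cons_induction with
  | empty => simp [RatFunc.denom_zero]
  | cons a s ha ih =>
    have hfa : Polynomial.eval z (f a).denom ≠ 0 := h a (Finset.mem_cons_self a s)
    obtain ⟨hd, he⟩ := ih (fun k hk => h k (Finset.mem_cons_of_mem hk))
    rw [Finset.sum_cons, Finset.sum_cons]
    have e1 : Polynomial.eval₂ (RingHom.id ℂ) z (f a).denom ≠ 0 := hfa
    have e2 : Polynomial.eval₂ (RingHom.id ℂ) z (∑ k ∈ s, f k).denom ≠ 0 := hd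
    constructor
    · refine eval_ne_zero_of_dvd (RatFunc.denom_add_dvd _ _) ?_
      rw [Polynomial.eval_mul]
      exact mul_ne_zero hfa hd
    · rw [RatFunc.eval_add _ _ e1 e2, he]

private lemma row_eval {m : ℕ} (Fr : Fin m → RatFunc ℂ) (c : Fin m → ℂ) (z : ℂ)
    (h : ∀ k, Polynomial.eval z (Fr k).denom ≠ 0) :
    Polynomial.eval z (∑ k, Fr k * RatFunc.C (c k)).denom ≠ 0 ∧
      (∑ k, Fr k * RatFunc.C (c k)).eval (RingHom.id ℂ) z
        = ∑ k, (Fr k).eval (RingHom.id ℂ) z * c k := by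
  have h1 : ∀ k ∈ Finset.univ, Polynomial.eval z (Fr k * RatFunc.C (c k)).denom ≠ 0 := by
    intro k _
    refine eval_ne_zero_of_dvd (RatFunc.denom_mul_dvd _ _) ?_
    rw [Polynomial.eval_mul, RatFunc.denom_C]
    simpa using h k
  obtain ⟨hd, he⟩ := sum_denom_eval Finset.univ (fun k => Fr k * RatFunc.C (c k)) z h1
  refine ⟨hd, he.trans ?_⟩
  refine Finset.sum_congr rfl fun k _ => ?_
  have e1 : Polynomial.eval₂ (RingHom.id ℂ) z (Fr k).denom ≠ 0 := h k
  have e2 : Polynomial.eval₂ (RingHom.id ℂ) z (RatFunc.C (c k) : RatFunc ℂ).denom ≠ 0 := by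
    rw [RatFunc.denom_C]; simp
  rw [RatFunc.eval_mul _ _ e1 e2, RatFunc.eval_C]
  rfl

/-- **Removing a zero of the determinant inside the unit disk.**
If `F` is a rational matrix function with no poles in the open unit disk and
`det F(a) = 0` for some `|a| < 1`, then there is a constant unitary matrix `U`
such that the first column of `F(z) U` vanishes at `z = a`; consequently
`F₁(z) = F(z) U diag[(1 - conj(a) z)/(z - a), 1, …, 1]` has no poles in the
open unit disk and satisfies `F₁(z) F₁(z)* = F(z) F(z)*` for all but finitely
many `z` on the unit circle. -/
theorem remove_determinant_zero
    (m : ℕ) (hm : 0 < m)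
    (F : Matrix (Fin m) (Fin m) (RatFunc ℂ))
    (hnopole : ∀ i j : Fin m, ∀ z : ℂ, ‖z‖ < 1 →
      Polynomial.eval z (F i j).denom ≠ 0)
    (a : ℂ) (ha : ‖a‖ < 1)
    (hdet : (matEval F a).det = 0) :
    ∃ U : Matrix (Fin m) (Fin m) ℂ, U * Uᴴ = 1 ∧
      (∀ i : Fin m, (matEval F a * U) i ⟨0, hm⟩ = 0) ∧
      (let r : RatFunc ℂ :=
        algebraMap (Polynomial ℂ) (RatFunc ℂ)
            (1 - Polynomial.C ((starRingEnd ℂ) a) * Polynomial.X) /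
          algebraMap (Polynomial ℂ) (RatFunc ℂ) (Polynomial.X - Polynomial.C a);
       let F₁ : Matrix (Fin m) (Fin m) (RatFunc ℂ) :=
        F * U.map (⇑RatFunc.C) *
          Matrix.diagonal (fun k => if k = (⟨0, hm⟩ : Fin m) then r else 1);
       (∀ i j : Fin m, ∀ z : ℂ, ‖z‖ < 1 →
          Polynomial.eval z (F₁ i j).denom ≠ 0) ∧
        {z : ℂ | ‖z‖ = 1 ∧
          matEval F₁ z * (matEval F₁ z)ᴴ ≠ matEval F z * (matEval F z)ᴴ}.Finite) := by
  classical
  set z0 : Fin m := ⟨0, hm⟩ with hz0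
  -- Step 1: a nonzero kernel vector of `matEval F a`.
  obtain ⟨v, hv0, hv⟩ := (Matrix.exists_mulVec_eq_zero_iff).2 hdet
  set v' : EuclideanSpace ℂ (Fin m) := (WithLp.equiv 2 (Fin m → ℂ)).symm v with hv'
  have hv'0 : v' ≠ 0 := by
    intro h
    apply hv0
    rw [hv'] at h
    have := congrArg (WithLp.equiv 2 (Fin m → ℂ)) h
    simpa using this
  set w : EuclideanSpace ℂ (Fin m) := (‖v'‖⁻¹ : ℝ) • v' with hw_def
  have hw : ‖w‖ = 1 := norm_smul_inv_norm hv'0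
  have hortho : Orthonormal ℂ (Set.restrict {z0} (fun _ : Fin m => w)) := by
    constructor
    · intro i; exact hw
    · intro i j hij
      exact absurd (Subtype.ext (i.2.trans j.2.symm)) hij
  obtain ⟨b, hb⟩ := hortho.exists_orthonormalBasis_extension_of_card_eq
    (by simpa using (finrank_euclideanSpace_fin :
      Module.finrank ℂ (EuclideanSpace ℂ (Fin m)) = m))
  have hb0 : b z0 = w := hb z0 rfl
  set U : Matrix (Fin m) (Fin m) ℂ := Matrix.of (fun i j => b j i) with hU
  have hUU : Uᴴ * U = 1 := by
    ext j k
    have h1 := orthonormal_iff_ite.mp b.orthonormal j k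
    rw [PiLp.inner_apply] at h1
    simp only [RCLike.inner_apply] at h1
    simpa [Matrix.mul_apply, Matrix.conjTranspose_apply, hU, Matrix.one_apply, mul_comm] using h1
  have hU1 : U * Uᴴ = 1 := mul_eq_one_comm.mpr hUU
  have hUcol : ∀ j, U j z0 = ((‖v'‖⁻¹ : ℝ) : ℂ) * v j := by
    intro j
    show b z0 j = _
    rw [hb0, hw_def, PiLp.smul_apply, Complex.real_smul]
    rfl
  have hcol : ∀ i : Fin m, (matEval F a * U) i z0 = 0 := by
    intro i
    have hMv : (matEval F a).mulVec v i = 0 := congrFun hv i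
    have : (matEval F a * U) i z0
        = ((‖v'‖⁻¹ : ℝ) : ℂ) * ((matEval F a).mulVec v i) := by
      simp only [Matrix.mul_apply, Matrix.mulVec, dotProduct, Finset.mul_sum]
      refine Finset.sum_congr rfl fun j _ => ?_
      rw [hUcol j]; ring
    rw [this, hMv, mul_zero]
  refine ⟨U, hU1, hcol, ?_⟩
  -- notation for the Blaschke factor and the modified function
  set A : Polynomial ℂ := 1 - Polynomial.C ((starRingEnd ℂ) a) * Polynomial.X with hA
  set B : Polynomial ℂ := Polynomial.X - Polynomial.C a with hB
  set r : RatFunc ℂ := algebraMap (Polynomial ℂ) (RatFunc ℂ) A /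
      algebraMap (Polynomial ℂ) (RatFunc ℂ) B with hrdef
  set F₁ : Matrix (Fin m) (Fin m) (RatFunc ℂ) :=
    F * U.map (⇑RatFunc.C) *
      Matrix.diagonal (fun k => if k = z0 then r else 1) with hF₁def
  set g : Fin m → Fin m → RatFunc ℂ :=
    fun i j => ∑ k, F i k * RatFunc.C (U k j) with hgdef
  have hBne : B ≠ 0 := Polynomial.X_sub_C_ne_zero a
  have hBmapne : algebraMap (Polynomial ℂ) (RatFunc ℂ) B ≠ 0 :=
    RatFunc.algebraMap_ne_zero hBne
  have hBr : algebraMap (Polynomial ℂ) (RatFunc ℂ) B * r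
      = algebraMap (Polynomial ℂ) (RatFunc ℂ) A := by
    rw [hrdef, mul_div_cancel₀ _ hBmapne]
  have hrden : r.denom ∣ B := RatFunc.denom_div_dvd A B
  have hF₁entry : ∀ i j, F₁ i j = g i j * (if j = z0 then r else 1) := by
    intro i j
    rw [hF₁def, Matrix.mul_diagonal]
    congr 1
  -- the first column of `F U` vanishes at `a`
  have hga : ∀ i, B ∣ (g i z0).num := by
    intro i
    have hden : ∀ k, Polynomial.eval a (F i k).denom ≠ 0 := fun k => hnopole i k a ha
    obtain ⟨hd, he⟩ := row_eval (fun k => F i k) (fun k => U k z0) a hden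
    have hval : (g i z0).eval (RingHom.id ℂ) a = 0 := by
      simp only [hgdef]
      rw [he]
      have := hcol i
      simpa [matEval, Matrix.mul_apply] using this
    have hgd : Polynomial.eval a (g i z0).denom ≠ 0 := by
      simp only [hgdef]; exact hd
    have hnum : Polynomial.eval a (g i z0).num = 0 := by
      have h2 : Polynomial.eval a (g i z0).num / Polynomial.eval a (g i z0).denom = 0 := hval
      rcases div_eq_zero_iff.mp h2 with h | h
      · exact h
      · exact absurd h hgd
    rw [hB]
    exact Polynomial.dvd_iff_isRoot.mpr hnum
  -- rewriting the first column of F₁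
  have key : ∀ i, ∃ p : Polynomial ℂ, g i z0 * r =
      algebraMap (Polynomial ℂ) (RatFunc ℂ) (p * A) /
        algebraMap (Polynomial ℂ) (RatFunc ℂ) (g i z0).denom := by
    intro i
    obtain ⟨p, hp⟩ := hga i
    refine ⟨p, ?_⟩
    have hdne : algebraMap (Polynomial ℂ) (RatFunc ℂ) (g i z0).denom ≠ 0 :=
      RatFunc.algebraMap_ne_zero (RatFunc.denom_ne_zero _)
    refine mul_left_cancel₀ hBmapne ?_
    calc algebraMap (Polynomial ℂ) (RatFunc ℂ) B * (g i z0 * r)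
        = g i z0 * (algebraMap (Polynomial ℂ) (RatFunc ℂ) B * r) := by ring
      _ = g i z0 * algebraMap (Polynomial ℂ) (RatFunc ℂ) A := by rw [hBr]
      _ = algebraMap (Polynomial ℂ) (RatFunc ℂ) (g i z0).num /
            algebraMap (Polynomial ℂ) (RatFunc ℂ) (g i z0).denom *
            algebraMap (Polynomial ℂ) (RatFunc ℂ) A := by rw [RatFunc.num_div_denom]
      _ = algebraMap (Polynomial ℂ) (RatFunc ℂ) B *
            (algebraMap (Polynomial ℂ) (RatFunc ℂ) (p * A) /
              algebraMap (Polynomial ℂ) (RatFunc ℂ) (g i z0).denom) := by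
          rw [hp, map_mul, map_mul, div_mul_eq_mul_div, mul_assoc, mul_div_assoc]
  -- no poles in the open disk
  have hpoles : ∀ i j : Fin m, ∀ z : ℂ, ‖z‖ < 1 →
      Polynomial.eval z (F₁ i j).denom ≠ 0 := by
    intro i j z hz
    have hden : ∀ k, Polynomial.eval z (F i k).denom ≠ 0 := fun k => hnopole i k z hz
    have hgden : Polynomial.eval z (g i j).denom ≠ 0 := by
      simp only [hgdef]
      exact (row_eval (fun k => F i k) (fun k => U k j) z hden).1
    rw [hF₁entry i j]
    by_cases hj : j = z0
    · subst hj
      rw [if_pos rfl]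
      obtain ⟨p, hp⟩ := key i
      rw [hp]
      exact eval_ne_zero_of_dvd (RatFunc.denom_div_dvd _ _) hgden
    · rw [if_neg hj, mul_one]
      exact hgden
  -- the finite exceptional set on the circle
  have hQne : B * ∏ i, ∏ k, (F i k).denom ≠ 0 := by
    refine mul_ne_zero hBne ?_
    refine Finset.prod_ne_zero_iff.mpr fun i _ => ?_
    exact Finset.prod_ne_zero_iff.mpr fun k _ => RatFunc.denom_ne_zero _
  have main : ∀ z : ℂ, ‖z‖ = 1 →
      Polynomial.eval z (B * ∏ i, ∏ k, (F i k).denom) ≠ 0 →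
      matEval F₁ z * (matEval F₁ z)ᴴ = matEval F z * (matEval F z)ᴴ := by
    intro z hz1 hQz
    rw [Polynomial.eval_mul] at hQz
    have hBz : Polynomial.eval z B ≠ 0 := fun h => hQz (by rw [h, zero_mul])
    have hFd : ∀ i k, Polynomial.eval z (F i k).denom ≠ 0 := by
      intro i k
      have hprod : Polynomial.eval z (∏ i, ∏ k, (F i k).denom) ≠ 0 :=
        fun h => hQz (by rw [h, mul_zero])
      rw [Polynomial.eval_prod] at hprod
      have h1 := Finset.prod_ne_zero_iff.mp hprod i (Finset.mem_univ i)
      rw [Polynomial.eval_prod] at h1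
      exact Finset.prod_ne_zero_iff.mp h1 k (Finset.mem_univ k)
    have hBzval : Polynomial.eval z B = z - a := by simp [hB]
    have hza : z - a ≠ 0 := by rw [← hBzval]; exact hBz
    have hrd : Polynomial.eval z r.denom ≠ 0 := eval_ne_zero_of_dvd hrden hBz
    set ρ : ℂ := r.eval (RingHom.id ℂ) z with hρdef
    have hρ : (z - a) * ρ = 1 - (starRingEnd ℂ) a * z := by
      have e1 : Polynomial.eval₂ (RingHom.id ℂ) z
          (algebraMap (Polynomial ℂ) (RatFunc ℂ) B).denom ≠ 0 := by
        rw [RatFunc.denom_algebraMap]; simp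
      have e2 : Polynomial.eval₂ (RingHom.id ℂ) z r.denom ≠ 0 := hrd
      have := congrArg (RatFunc.eval (RingHom.id ℂ) z) hBr
      rw [RatFunc.eval_mul _ _ e1 e2, RatFunc.eval_algebraMap, RatFunc.eval_algebraMap] at this
      simpa [hA, hB] using this
    have hzz : z * (starRingEnd ℂ) z = 1 := by
      rw [Complex.mul_conj]
      norm_cast
      rw [Complex.normSq_eq_norm_sq, hz1]; norm_num
    have hρρ : ρ * (starRingEnd ℂ) ρ = 1 := by
      have hρc : ((starRingEnd ℂ) z - (starRingEnd ℂ) a) * (starRingEnd ℂ) ρ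
          = 1 - a * (starRingEnd ℂ) z := by
        have := congrArg (starRingEnd ℂ) hρ
        simpa [map_mul, map_sub, map_one] using this
      have hzac : (starRingEnd ℂ) z - (starRingEnd ℂ) a ≠ 0 := by
        intro h
        apply hza
        have h2 := congrArg (starRingEnd ℂ) h
        simpa [map_sub, Complex.conj_conj] using h2
      have hmain : (z - a) * ((starRingEnd ℂ) z - (starRingEnd ℂ) a) * (ρ * (starRingEnd ℂ) ρ)
          = (z - a) * ((starRingEnd ℂ) z - (starRingEnd ℂ) a) := by
        linear_combination (((starRingEnd ℂ) z - (starRingEnd ℂ) a) * (starRingEnd ℂ) ρ) * hρ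
          + (1 - (starRingEnd ℂ) a * z) * hρc + (a * (starRingEnd ℂ) a - 1) * hzz
      have hne2 : (z - a) * ((starRingEnd ℂ) z - (starRingEnd ℂ) a) ≠ 0 :=
        mul_ne_zero hza hzac
      exact mul_left_cancel₀ hne2 (by rw [hmain, mul_one])
    -- evaluate F₁ at z
    set D : Matrix (Fin m) (Fin m) ℂ :=
      Matrix.diagonal (fun k => if k = z0 then ρ else 1) with hD
    have hevalF₁ : matEval F₁ z = matEval F z * U * D := by
      ext i j
      have hden : ∀ k, Polynomial.eval z (F i k).denom ≠ 0 := hFd i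
      obtain ⟨hgden, hgev⟩ := row_eval (fun k => F i k) (fun k => U k j) z hden
      have hstep : (F₁ i j).eval (RingHom.id ℂ) z
          = (g i j).eval (RingHom.id ℂ) z * (if j = z0 then ρ else 1) := by
        rw [hF₁entry i j]
        by_cases hj : j = z0
        · subst hj
          rw [if_pos rfl, if_pos rfl]
          have e1 : Polynomial.eval₂ (RingHom.id ℂ) z (g i z0).denom ≠ 0 := by
            simp only [hgdef]; exact hgden
          have e2 : Polynomial.eval₂ (RingHom.id ℂ) z r.denom ≠ 0 := hrd
          rw [RatFunc.eval_mul _ _ e1 e2]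
        · rw [if_neg hj, if_neg hj, mul_one, mul_one]
      show (F₁ i j).eval (RingHom.id ℂ) z = (matEval F z * U * D) i j
      rw [hstep, hD, Matrix.mul_diagonal]
      congr 1
    have hDD : D * Dᴴ = 1 := by
      rw [hD, Matrix.diagonal_conjTranspose, Matrix.diagonal_mul_diagonal,
        ← Matrix.diagonal_one]
      rw [Matrix.diagonal_eq_diagonal_iff]
      intro k
      by_cases hk : k = z0
      · subst hk
        simp only [Pi.star_apply, if_pos rfl]
        exact hρρ
      · simp only [Pi.star_apply, if_neg hk]
        simp
    rw [hevalF₁, Matrix.conjTranspose_mul, Matrix.conjTranspose_mul]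
    calc matEval F z * U * D * (Dᴴ * (Uᴴ * (matEval F z)ᴴ))
        = matEval F z * U * (D * Dᴴ) * (Uᴴ * (matEval F z)ᴴ) := by
          simp only [Matrix.mul_assoc]
      _ = matEval F z * ((U * Uᴴ) * (matEval F z)ᴴ) := by
          rw [hDD, Matrix.mul_one]
          simp only [Matrix.mul_assoc]
      _ = matEval F z * (matEval F z)ᴴ := by rw [hU1, Matrix.one_mul]
  refine ⟨hpoles, ?_⟩
  refine Set.Finite.subset (Polynomial.finite_setOf_isRoot hQne) ?_
  intro z hzmem
  obtain ⟨hz1, hne⟩ := hzmem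
  show Polynomial.IsRoot _ z
  by_contra hQ
  exact hne (main z hz1 hQ)
end

section
/- Let S(z) = ∑_{n=0}^{2N} C_n z^n be an m×m matrix polynomial that is positive definite Hermitian for all but finitely many real numbers x, and let S⁺ be an m×m rational matrix function with no poles in the closed upper half-plane {Im z ≥ 0}, with det S⁺(z) ≠ 0 for every z with Im z > 0, and with S⁺(x) S⁺(x)* = S(x) for all but finitely many x ∈ ℝ. Then every entry of S⁺ is a polynomial in z of degree at most N, i.e., S⁺(z) = ∑_{n=0}^{N} A_n z^n for some A_0, …, A_N ∈ ℂ^{m×m}, and moreover A_N ≠ 0 whenever C_{2N} ≠ 0. -/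
open scoped BigOperators Matrix ComplexOrder

open Polynomial

set_option maxRecDepth 8000

lemma ratEval_eq (f : RatFunc ℂ) (z : ℂ) :
    f.eval (RingHom.id ℂ) z = f.num.eval z / f.denom.eval z := rfl

lemma conj_eval (p : Polynomial ℂ) (z : ℂ) :
    (p.map (starRingEnd ℂ)).eval z = starRingEnd ℂ (p.eval (starRingEnd ℂ z)) := by
  rw [Polynomial.eval_map]
  have := Polynomial.eval₂_at_apply (p := p) (starRingEnd ℂ) (starRingEnd ℂ z)
  rw [Complex.conj_conj] at this
  rw [this]

/-- two polynomials agreeing on the complement of a finite real set are equal -/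
lemma poly_eq_of_real {p q : Polynomial ℂ} {E : Set ℝ} (hE : E.Finite)
    (h : ∀ x : ℝ, x ∉ E → p.eval (x : ℂ) = q.eval (x : ℂ)) : p = q := by
  have hsub : (p - q) = 0 := by
    apply Polynomial.eq_zero_of_infinite_isRoot
    apply Set.Infinite.mono (s := (fun x : ℝ => (x : ℂ)) '' Eᶜ)
    · rintro z ⟨x, hx, rfl⟩
      simp [Polynomial.IsRoot, h x hx]
    · exact Set.Infinite.image (Set.injOn_of_injective Complex.ofReal_injective)
        (hE.infinite_compl)
  exact sub_eq_zero.mp hsub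

lemma sum_mul_conj_eq_zero {ι : Type*} {s : Finset ι} {a : ι → ℂ}
    (h : ∑ k ∈ s, a k * starRingEnd ℂ (a k) = 0) : ∀ k ∈ s, a k = 0 := by
  have h2 : ∑ k ∈ s, (Complex.normSq (a k) : ℂ) = 0 := by
    rw [← h]; exact Finset.sum_congr rfl fun k _ => (Complex.mul_conj (a k)).symm
  rw [← Complex.ofReal_sum] at h2
  have h3 : ∑ k ∈ s, Complex.normSq (a k) = 0 := by exact_mod_cast h2
  intro k hk
  have := (Finset.sum_eq_zero_iff_of_nonneg (fun k _ => Complex.normSq_nonneg (a k))).mp h3 k hk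
  exact Complex.normSq_eq_zero.mp this

namespace RSF

variable {m : ℕ}

/-- the polynomial matrix with coefficient matrices `C`. -/
noncomputable def Spoly (N : ℕ) (C : ℕ → Matrix (Fin m) (Fin m) ℂ) :
    Matrix (Fin m) (Fin m) (Polynomial ℂ) :=
  Matrix.of fun i j => ∑ n ∈ Finset.range (2 * N + 1),
    Polynomial.C ((C n) i j) * Polynomial.X ^ n

lemma Spoly_eval (N : ℕ) (C : ℕ → Matrix (Fin m) (Fin m) ℂ) (x : ℂ) (i j : Fin m) :
    (Spoly N C i j).eval x = ((∑ n ∈ Finset.range (2 * N + 1), x ^ n • C n) : _) i j := by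
  rw [Matrix.sum_apply]
  show (∑ n ∈ Finset.range (2 * N + 1),
      Polynomial.C ((C n) i j) * Polynomial.X ^ n).eval x = _
  rw [Polynomial.eval_finset_sum]
  refine Finset.sum_congr rfl fun n _ => ?_
  rw [Matrix.smul_apply, smul_eq_mul,
    Polynomial.eval_mul, Polynomial.eval_C, Polynomial.eval_pow, Polynomial.eval_X, mul_comm]

lemma Spoly_deg (N : ℕ) (C : ℕ → Matrix (Fin m) (Fin m) ℂ) (i j : Fin m) :
    (Spoly N C i j).natDegree ≤ 2 * N := by
  simp only [Spoly, Matrix.of_apply]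
  refine Polynomial.natDegree_sum_le_of_forall_le _ _ fun n hn => ?_
  exact le_trans (Polynomial.natDegree_C_mul_X_pow_le _ _)
    (Nat.lt_succ_iff.mp (Finset.mem_range.mp hn))

lemma Spoly_coeff (N : ℕ) (C : ℕ → Matrix (Fin m) (Fin m) ℂ) (i j : Fin m) :
    (Spoly N C i j).coeff (2 * N) = C (2 * N) i j := by
  simp only [Spoly, Matrix.of_apply, Polynomial.finset_sum_coeff, Polynomial.coeff_C_mul,
    Polynomial.coeff_X_pow]
  rw [Finset.sum_eq_single (2 * N)]
  · simp
  · intro n _ hne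
    simp only [ite_eq_right_iff, mul_eq_zero]
    exact Or.inr fun h => absurd h.symm hne
  · intro h; exact absurd (Finset.self_mem_range_succ (2 * N)) h

/-- the common denominator -/
noncomputable def Dden (Sp : Matrix (Fin m) (Fin m) (RatFunc ℂ)) : Polynomial ℂ :=
  ∏ p : Fin m × Fin m, (Sp p.1 p.2).denom

lemma Dden_ne (Sp : Matrix (Fin m) (Fin m) (RatFunc ℂ)) : Dden Sp ≠ 0 :=
  Finset.prod_ne_zero_iff.mpr fun p _ => RatFunc.denom_ne_zero _

lemma denom_dvd_Dden (Sp : Matrix (Fin m) (Fin m) (RatFunc ℂ)) (i j : Fin m) :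
    (Sp i j).denom ∣ Dden Sp := by
  have := Finset.dvd_prod_of_mem (fun p : Fin m × Fin m => (Sp p.1 p.2).denom)
    (Finset.mem_univ (i, j))
  exact this

/-- the polynomial numerator matrix after clearing denominators -/
noncomputable def Qm (Sp : Matrix (Fin m) (Fin m) (RatFunc ℂ)) :
    Matrix (Fin m) (Fin m) (Polynomial ℂ) :=
  Matrix.of fun i j => (Sp i j).num * (Dden Sp / (Sp i j).denom)

lemma den_mul_div (Sp : Matrix (Fin m) (Fin m) (RatFunc ℂ)) (i j : Fin m) :
    (Sp i j).denom * (Dden Sp / (Sp i j).denom) = Dden Sp :=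
  EuclideanDomain.mul_div_cancel' (RatFunc.denom_ne_zero _) (denom_dvd_Dden Sp i j)

lemma Qm_alg (Sp : Matrix (Fin m) (Fin m) (RatFunc ℂ)) (i j : Fin m) :
    algebraMap (Polynomial ℂ) (RatFunc ℂ) (Qm Sp i j)
      = algebraMap (Polynomial ℂ) (RatFunc ℂ) (Dden Sp) * Sp i j := by
  have hden : algebraMap (Polynomial ℂ) (RatFunc ℂ) (Sp i j).denom ≠ 0 :=
    RatFunc.algebraMap_ne_zero (RatFunc.denom_ne_zero _)
  have hD : algebraMap (Polynomial ℂ) (RatFunc ℂ) (Dden Sp)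
      = algebraMap (Polynomial ℂ) (RatFunc ℂ) (Sp i j).denom
        * algebraMap (Polynomial ℂ) (RatFunc ℂ) (Dden Sp / (Sp i j).denom) := by
    rw [← map_mul, den_mul_div]
  conv_rhs => rw [← RatFunc.num_div_denom (Sp i j)]
  rw [Qm, Matrix.of_apply, map_mul, hD]
  rw [mul_comm (algebraMap (Polynomial ℂ) (RatFunc ℂ) (Sp i j).denom), mul_assoc,
    mul_comm (algebraMap (Polynomial ℂ) (RatFunc ℂ) (Sp i j).denom), div_mul_cancel₀ _ hden]
  exact mul_comm _ _

lemma matEval_apply (Sp : Matrix (Fin m) (Fin m) (RatFunc ℂ)) (z : ℂ) (i j : Fin m) :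
    matEval Sp z i j = (Sp i j).num.eval z / (Sp i j).denom.eval z := rfl

lemma Qm_eval (Sp : Matrix (Fin m) (Fin m) (RatFunc ℂ)) (z : ℂ)
    (hz : (Dden Sp).eval z ≠ 0) (i j : Fin m) :
    (Qm Sp i j).eval z = (Dden Sp).eval z * matEval Sp z i j := by
  have hz' := hz
  rw [← den_mul_div Sp i j, Polynomial.eval_mul] at hz'
  obtain ⟨h1, h2⟩ := mul_ne_zero_iff.mp hz'
  rw [matEval_apply, Qm, Matrix.of_apply, Polynomial.eval_mul]
  conv_lhs => rw [← den_mul_div Sp i j]  -- dummy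
  rw [den_mul_div]
  conv_rhs => rw [← den_mul_div Sp i j]
  rw [Polynomial.eval_mul]
  field_simp

lemma Qm_map_eval (Sp : Matrix (Fin m) (Fin m) (RatFunc ℂ)) (z : ℂ)
    (hz : (Dden Sp).eval z ≠ 0) :
    (Qm Sp).map (fun p => p.eval z) = ((Dden Sp).eval z) • matEval Sp z := by
  ext i j
  rw [Matrix.map_apply, Matrix.smul_apply, smul_eq_mul, Qm_eval Sp z hz]

lemma Qm_det_eval (Sp : Matrix (Fin m) (Fin m) (RatFunc ℂ)) (z : ℂ)
    (hz : (Dden Sp).eval z ≠ 0) :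
    (Qm Sp).det.eval z = ((Dden Sp).eval z) ^ m * (matEval Sp z).det := by
  have h := RingHom.map_det (Polynomial.evalRingHom z) (Qm Sp)
  rw [RingHom.mapMatrix_apply] at h
  have h' : (Qm Sp).det.eval z = ((Qm Sp).map fun p => p.eval z).det := h
  rw [h', Qm_map_eval Sp z hz, Matrix.det_smul, Fintype.card_fin]

/-- conjugate-transpose of a polynomial matrix -/
noncomputable def ctp (T : Matrix (Fin m) (Fin m) (Polynomial ℂ)) :
    Matrix (Fin m) (Fin m) (Polynomial ℂ) :=
  (T.map (Polynomial.mapRingHom (starRingEnd ℂ)))ᵀ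

lemma ctp_apply (T : Matrix (Fin m) (Fin m) (Polynomial ℂ)) (i j : Fin m) :
    ctp T i j = (T j i).map (starRingEnd ℂ) := rfl

lemma ctp_det (T : Matrix (Fin m) (Fin m) (Polynomial ℂ)) :
    (ctp T).det = T.det.map (starRingEnd ℂ) := by
  rw [ctp, Matrix.det_transpose, ← RingHom.mapMatrix_apply, ← RingHom.map_det]
  rfl

end RSF

open RSF in
/-- If `S(z) = ∑_{n=0}^{2N} C_n z^n` is an `m × m` matrix polynomial which is
positive definite Hermitian for all but finitely many real `x`, and `S⁺` is a
rational matrix function with no poles in the closed upper half-plane, with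
`det S⁺(z) ≠ 0` on the open upper half-plane, and with `S⁺(x) S⁺(x)* = S(x)`
for all but finitely many `x ∈ ℝ`, then every entry of `S⁺` is a polynomial of
degree at most `N`: `S⁺(z) = ∑_{n=0}^N A_n z^n`, with `A_N ≠ 0` whenever
`C_{2N} ≠ 0`. -/
theorem rational_spectral_factor_is_polynomial_line
    (m N : ℕ) (hm : 0 < m) (hN : 0 < N)
    (C : ℕ → Matrix (Fin m) (Fin m) ℂ)
    (S : ℂ → Matrix (Fin m) (Fin m) ℂ)
    (hS : ∀ z : ℂ, S z = ∑ n ∈ Finset.range (2 * N + 1), z ^ n • C n)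
    (hpos : {x : ℝ | ¬ (S (x : ℂ)).PosDef}.Finite)
    (Sp : Matrix (Fin m) (Fin m) (RatFunc ℂ))
    (hnopole : ∀ i j : Fin m, ∀ z : ℂ, 0 ≤ z.im →
      Polynomial.eval z (Sp i j).denom ≠ 0)
    (hdet : ∀ z : ℂ, 0 < z.im → (matEval Sp z).det ≠ 0)
    (hfac : {x : ℝ | matEval Sp (x : ℂ) * (matEval Sp (x : ℂ))ᴴ ≠ S (x : ℂ)}.Finite) :
    ∃ A : ℕ → Matrix (Fin m) (Fin m) ℂ,
      (∀ i j : Fin m, Sp i j =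
        algebraMap (Polynomial ℂ) (RatFunc ℂ)
          (∑ n ∈ Finset.range (N + 1), Polynomial.C (A n i j) * Polynomial.X ^ n)) ∧
      (C (2 * N) ≠ 0 → A N ≠ 0) := by
  have _inst : Nonempty (Fin m) := ⟨⟨0, hm⟩⟩
  classical
  -- D has no zeros in the closed upper half-plane
  have hD_eval : ∀ z : ℂ, 0 ≤ z.im → (Dden Sp).eval z ≠ 0 := by
    intro z hz
    rw [Dden, Polynomial.eval_prod]
    exact Finset.prod_ne_zero_iff.mpr fun p _ => hnopole p.1 p.2 z hz
  -- Identity (I): Q * Qᴴ~ = (D * D~) • Spoly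
  have hI : Qm Sp * ctp (Qm Sp)
      = (Dden Sp * (Dden Sp).map (starRingEnd ℂ)) • Spoly N C := by
    refine Matrix.ext fun i j => ?_
    apply poly_eq_of_real hfac
    intro x hx
    have hfx : matEval Sp (x : ℂ) * (matEval Sp (x : ℂ))ᴴ = S (x : ℂ) := not_not.mp hx
    have hDx : (Dden Sp).eval ((x : ℝ) : ℂ) ≠ 0 := hD_eval _ (by simp)
    have hconjx : (starRingEnd ℂ) ((x : ℝ) : ℂ) = ((x : ℝ) : ℂ) := Complex.conj_ofReal x
    rw [Matrix.mul_apply, Polynomial.eval_finset_sum]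
    have hterm : ∀ k, ((Qm Sp i k) * (ctp (Qm Sp) k j)).eval ((x:ℝ):ℂ)
        = ((Dden Sp).eval ((x:ℝ):ℂ) * (starRingEnd ℂ) ((Dden Sp).eval ((x:ℝ):ℂ)))
          * (matEval Sp ((x:ℝ):ℂ) i k * (starRingEnd ℂ) (matEval Sp ((x:ℝ):ℂ) j k)) := by
      intro k
      rw [Polynomial.eval_mul, ctp_apply, conj_eval, hconjx, Qm_eval Sp _ hDx,
        Qm_eval Sp _ hDx, map_mul]
      ring
    rw [Finset.sum_congr rfl fun k _ => hterm k, ← Finset.mul_sum]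
    rw [Matrix.smul_apply, smul_eq_mul, Polynomial.eval_mul, Polynomial.eval_mul,
      conj_eval, hconjx, Spoly_eval, ← hS, ← hfx, Matrix.mul_apply]
    congr 1
  -- determinant facts
  have hQdet_pos : ∀ z : ℂ, 0 < z.im → (Qm Sp).det.eval z ≠ 0 := by
    intro z hz
    rw [Qm_det_eval Sp z (hD_eval z hz.le)]
    exact mul_ne_zero (pow_ne_zero _ (hD_eval z hz.le)) (hdet z hz)
  have hQdet_ne : (Qm Sp).det ≠ 0 := by
    intro h
    exact hQdet_pos Complex.I (by simp) (by rw [h]; simp)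
  have hQtdet_ne : (ctp (Qm Sp)).det ≠ 0 := by
    rw [ctp_det]
    exact Polynomial.map_ne_zero hQdet_ne
  have hQtdet_eval : ∀ z : ℂ, z.im < 0 → (ctp (Qm Sp)).det.eval z ≠ 0 := by
    intro z hz
    rw [ctp_det, conj_eval]
    simp only [ne_eq, _root_.map_eq_zero]
    apply hQdet_pos
    simp only [Complex.conj_im]
    linarith
  -- key identity from adjugate
  have hKey : ∀ i j, (ctp (Qm Sp)).det * Qm Sp i j
      = (Dden Sp * (Dden Sp).map (starRingEnd ℂ)) *
        ((Spoly N C * (ctp (Qm Sp)).adjugate) i j) := by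
    intro i j
    have h := congrArg (fun M => M * (ctp (Qm Sp)).adjugate) hI
    rw [Matrix.mul_assoc, Matrix.mul_adjugate, Matrix.mul_smul, Matrix.mul_one,
      Matrix.smul_mul] at h
    have h2 := congrFun (congrFun h i) j
    simpa [Matrix.smul_apply, smul_eq_mul] using h2
  -- each denominator is trivial
  have hdenom1 : ∀ i j, (Sp i j).denom = 1 := by
    intro i j
    have hDne : algebraMap (Polynomial ℂ) (RatFunc ℂ) (Dden Sp) ≠ 0 :=
      RatFunc.algebraMap_ne_zero (Dden_ne Sp)
    have halg : algebraMap (Polynomial ℂ) (RatFunc ℂ) (Dden Sp) *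
        (algebraMap (Polynomial ℂ) (RatFunc ℂ) ((ctp (Qm Sp)).det) * Sp i j)
        = algebraMap (Polynomial ℂ) (RatFunc ℂ) (Dden Sp) *
          algebraMap (Polynomial ℂ) (RatFunc ℂ)
            ((Dden Sp).map (starRingEnd ℂ) * ((Spoly N C * (ctp (Qm Sp)).adjugate) i j)) := by
      rw [show algebraMap (Polynomial ℂ) (RatFunc ℂ) (Dden Sp) *
          (algebraMap (Polynomial ℂ) (RatFunc ℂ) ((ctp (Qm Sp)).det) * Sp i j)
          = algebraMap (Polynomial ℂ) (RatFunc ℂ) ((ctp (Qm Sp)).det) *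
            (algebraMap (Polynomial ℂ) (RatFunc ℂ) (Dden Sp) * Sp i j) by ring,
        ← Qm_alg, ← map_mul, hKey i j, map_mul, map_mul, map_mul]
      ring
    have halg2 := mul_left_cancel₀ hDne halg
    have hSp_eq : Sp i j = algebraMap (Polynomial ℂ) (RatFunc ℂ)
        ((Dden Sp).map (starRingEnd ℂ) * ((Spoly N C * (ctp (Qm Sp)).adjugate) i j)) /
        algebraMap (Polynomial ℂ) (RatFunc ℂ) ((ctp (Qm Sp)).det) := by
      rw [← halg2, mul_div_cancel_left₀]
      exact RatFunc.algebraMap_ne_zero hQtdet_ne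
    have hdvd : (Sp i j).denom ∣ (ctp (Qm Sp)).det :=
      (RatFunc.denom_dvd hQtdet_ne).mpr ⟨_, hSp_eq⟩
    have hdeg0 : (Sp i j).denom.degree ≤ 0 := by
      by_contra hdeg
      obtain ⟨z, hz⟩ := Complex.exists_root (lt_of_not_ge hdeg)
      rcases le_or_gt 0 z.im with h0 | h0
      · exact hnopole i j z h0 hz
      · obtain ⟨r, hr⟩ := hdvd
        apply hQtdet_eval z h0
        rw [hr, Polynomial.eval_mul, hz, zero_mul]
    have hc := Polynomial.eq_C_of_degree_le_zero hdeg0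
    have hnd : (Sp i j).denom.natDegree = 0 :=
      Polynomial.natDegree_eq_zero_iff_degree_le_zero.mpr hdeg0
    have h1 : (Sp i j).denom.coeff 0 = 1 := by
      have hmon := RatFunc.monic_denom (Sp i j)
      rwa [Polynomial.Monic, Polynomial.leadingCoeff, hnd] at hmon
    rw [hc, h1, map_one]
  -- entries are polynomials
  have hP : ∀ i j, Sp i j = algebraMap (Polynomial ℂ) (RatFunc ℂ) ((Sp i j).num) := by
    intro i j
    conv_lhs => rw [← RatFunc.num_div_denom (Sp i j)]
    rw [hdenom1 i j, map_one, div_one]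
  have hPeval : ∀ (z : ℂ) (i j : Fin m), matEval Sp z i j = (Sp i j).num.eval z := by
    intro z i j
    rw [matEval_apply, hdenom1 i j, Polynomial.eval_one, div_one]
  -- Identity (II)
  have hII : ∀ i j, (∑ k, (Sp i k).num * ((Sp j k).num.map (starRingEnd ℂ)))
      = Spoly N C i j := by
    intro i j
    apply poly_eq_of_real hfac
    intro x hx
    have hfx : matEval Sp (x : ℂ) * (matEval Sp (x : ℂ))ᴴ = S (x : ℂ) := not_not.mp hx
    have hconjx : (starRingEnd ℂ) ((x : ℝ) : ℂ) = ((x : ℝ) : ℂ) := Complex.conj_ofReal x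
    rw [Polynomial.eval_finset_sum, Spoly_eval, ← hS, ← hfx, Matrix.mul_apply]
    refine Finset.sum_congr rfl fun k _ => ?_
    rw [Polynomial.eval_mul, conj_eval, hconjx, ← hPeval, ← hPeval,
      Matrix.conjTranspose_apply]
    rfl
  -- degree bound
  have hdeg : ∀ i k, ((Sp i k).num).natDegree ≤ N := by
    intro i k
    by_contra hgt
    push_neg at hgt
    set d := Finset.univ.sup (fun k : Fin m => ((Sp i k).num).natDegree) with hd
    have hle : ∀ k' : Fin m, ((Sp i k').num).natDegree ≤ d := fun k' => by
      rw [hd]; exact Finset.le_sup (f := fun k : Fin m => ((Sp i k).num).natDegree) (Finset.mem_univ k')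
    have hNd : N < d := lt_of_lt_of_le hgt (hle k)
    have hcoeff : (Spoly N C i i).coeff (d + d) = 0 :=
      Polynomial.coeff_eq_zero_of_natDegree_lt
        (lt_of_le_of_lt (Spoly_deg N C i i) (by omega))
    rw [← hII i i, Polynomial.finset_sum_coeff] at hcoeff
    have hterm : ∀ k' : Fin m,
        ((Sp i k').num * ((Sp i k').num.map (starRingEnd ℂ))).coeff (d + d)
        = ((Sp i k').num.coeff d) * (starRingEnd ℂ) ((Sp i k').num.coeff d) := by
      intro k'
      rw [Polynomial.coeff_mul_add_eq_of_natDegree_le (hle k')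
        (le_trans Polynomial.natDegree_map_le (hle k')), Polynomial.coeff_map]
    rw [Finset.sum_congr rfl fun k' _ => hterm k'] at hcoeff
    have hall := sum_mul_conj_eq_zero hcoeff
    obtain ⟨k0, -, hk0⟩ := Finset.exists_mem_eq_sup Finset.univ Finset.univ_nonempty
      (fun k : Fin m => ((Sp i k).num).natDegree)
    have hne0 : (Sp i k0).num ≠ 0 := by
      intro h0
      rw [h0, Polynomial.natDegree_zero] at hk0
      omega
    have h2 := hall k0 (Finset.mem_univ k0)
    rw [hd, hk0, Polynomial.coeff_natDegree] at h2
    exact hne0 (Polynomial.leadingCoeff_eq_zero.mp h2)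
  -- conclusion
  refine ⟨fun n => Matrix.of fun i j => ((Sp i j).num).coeff n, ?_, ?_⟩
  · intro i j
    rw [hP i j]
    congr 1
    conv_lhs => rw [Polynomial.as_sum_range' ((Sp i j).num) (N + 1)
      (Nat.lt_succ_of_le (hdeg i j))]
    exact Finset.sum_congr rfl fun n _ => by
      simp [Polynomial.C_mul_X_pow_eq_monomial]
  · intro hC hA0
    apply hC
    ext i j
    have h2N : (Spoly N C i j).coeff (2 * N) = 0 := by
      rw [← hII i j, Polynomial.finset_sum_coeff]
      refine Finset.sum_eq_zero fun k _ => ?_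
      have h2 : 2 * N = N + N := by ring
      rw [h2, Polynomial.coeff_mul_add_eq_of_natDegree_le (hdeg i k)
        (le_trans Polynomial.natDegree_map_le (hdeg j k))]
      have hzero : ((Sp i k).num).coeff N = 0 := by
        have := congrFun (congrFun hA0 i) k
        simpa using this
      rw [hzero, zero_mul]
    rw [Spoly_coeff N C i j] at h2N
    simpa using h2N
end
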